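/- arXiv:2508.05942 — 5 statements merged into one kernel-verified Lean document; each statement's English description precedes it below -/
import Mathlib

section
/- Let b ≥ 3 be an integer such that b+1 is not a power of 2, let α be a nonzero integer, and let q ≥ 5 be a prime. Suppose given: (i) integers r_{(j,0,0)} for 1 ≤ j ≤ q and r_{(j,0,1)} for 0 ≤ j ≤ q such that {r_{(j,0,0)} (mod 2^j) : 1 ≤ j ≤ q} ∪ {r_{(j,0,1)} (mod 2^j·q) : 0 ≤ j ≤ q} is a covering system of the integers; (ii) integers r_{(j,k,j')} for 0 ≤ j ≤ q, 1 ≤ k ≤ q, 0 ≤ j' ≤ 1 such that {r_{(j,k,j')} (mod 2^j·3^k·q^{j'})} is a covering system of the integers; and (iii) primes p_{(j,0,j')} and p_{(j,k,j')} (over the respective index ranges), pairwise distinct across both systems, such that each such prime indexed by exponent triple (j,k,j') is a primitive prime divisor of b^{2^j·3^k·q^{j'}} − 1 (with k = 0 for the first system). Let P_max be the maximum of all these primes and let M be the least common multiple of 2^q, 3^q, b−1, q, and all of the primes. Then there exists an integer T such that for every positive integer t with t ≡ T (mod M) and (t·b^t + α)·b + 1 ≥ P_max, the number t·b^t + α is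 a b-Brier number. -/
/-- An integer `m` is composite if `m > 1` and `m` is not prime. -/
def IsComposite (m : ℤ) : Prop := 1 < m ∧ ¬ Prime m

/-- `p` is a primitive prime divisor of `b ^ w - 1`. -/
def IsPrimitivePrimeDiv (b : ℤ) (w : ℕ) (p : ℕ) : Prop :=
  p.Prime ∧ (p : ℤ) ∣ b ^ w - 1 ∧ ∀ ℓ : ℕ, 1 ≤ ℓ → ℓ < w → ¬ (p : ℤ) ∣ b ^ ℓ - 1

/-- `k` is a `b`-Sierpiński number: a positive integer with `gcd (k+1) (b-1) = 1`
such that `k * b ^ n + 1` is composite for all positive integers `n`. -/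
def IsBSierpinski (b k : ℤ) : Prop :=
  0 < k ∧ Int.gcd (k + 1) (b - 1) = 1 ∧ ∀ n : ℕ, 0 < n → IsComposite (k * b ^ n + 1)

/-- `k` is a `b`-Riesel number: a positive integer with `gcd (k-1) (b-1) = 1`
such that `k * b ^ n - 1` is composite for all positive integers `n`. -/
def IsBRiesel (b k : ℤ) : Prop :=
  0 < k ∧ Int.gcd (k - 1) (b - 1) = 1 ∧ ∀ n : ℕ, 0 < n → IsComposite (k * b ^ n - 1)

/-- `k` is a `b`-Brier number: both `b`-Sierpiński and `b`-Riesel. -/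
def IsBBrier (b k : ℤ) : Prop := IsBSierpinski b k ∧ IsBRiesel b k

/-- CRT for two moduli with compatible residues. -/
lemma crt2 (m₁ m₂ a₁ a₂ : ℤ) (h : a₁ ≡ a₂ [ZMOD (Int.gcd m₁ m₂ : ℤ)]) :
    ∃ T : ℤ, T ≡ a₁ [ZMOD m₁] ∧ T ≡ a₂ [ZMOD m₂] := by
  have hg : ((Int.gcd m₁ m₂ : ℤ)) ∣ a₂ - a₁ := Int.ModEq.dvd h
  obtain ⟨s, hs⟩ := hg
  refine ⟨a₁ + m₁ * Int.gcdA m₁ m₂ * s, ?_, ?_⟩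
  · have : m₁ ∣ (a₁ + m₁ * Int.gcdA m₁ m₂ * s) - a₁ := ⟨Int.gcdA m₁ m₂ * s, by ring⟩
    exact (Int.modEq_iff_dvd.mpr (by simpa using this.neg_right)).symm
  · have hb := Int.gcd_eq_gcd_ab m₁ m₂
    have : m₂ ∣ a₂ - (a₁ + m₁ * Int.gcdA m₁ m₂ * s) := by
      refine ⟨Int.gcdB m₁ m₂ * s, ?_⟩
      have : a₂ - a₁ = (m₁ * Int.gcdA m₁ m₂ + m₂ * Int.gcdB m₁ m₂) * s := by
        rw [← hb]; exact hs
      linarith [this]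
    exact (Int.modEq_iff_dvd.mpr this)

lemma pow_eq_of_modEq {M : Type*} [Monoid M] (B : M) (U : ℕ) (hU : B ^ U = 1)
    {s t : ℕ} (h : s ≡ t [MOD U]) : B ^ s = B ^ t := by
  have key : ∀ m : ℕ, B ^ m = B ^ (m % U) := by
    intro m
    conv_lhs => rw [← Nat.div_add_mod m U]
    rw [pow_add, pow_mul, hU, one_pow, one_mul]
  rw [key s, key t, h]

lemma nat_modEq_of_int (a c n : ℕ) (h : (a : ℤ) ≡ (c : ℤ) [ZMOD (n : ℤ)]) : a ≡ c [MOD n] :=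
  Int.natCast_modEq_iff.mp h

/-- Local solvability: choose a residue class mod `P` forcing the divisibility. -/
lemma step_lemma (P : ℕ) (hP : P.Prime) (b α ε : ℤ) (hb : (b : ZMod P) ≠ 0)
    (U u ρ : ℕ) (hBU : (b : ZMod P) ^ U = 1) :
    ∃ a : ℤ, ∀ t : ℕ, t ≡ u [MOD U] → (t : ℤ) ≡ a [ZMOD (P : ℤ)] →
      (P : ℤ) ∣ ((t : ℤ) * b ^ t + α) * b ^ ρ + ε := by
  haveI := Fact.mk hP
  set B := (b : ZMod P) with hB
  refine ⟨(((-(ε : ZMod P) - (α : ZMod P) * B ^ ρ) * (B ^ (u + ρ))⁻¹ : ZMod P)).val, ?_⟩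
  intro t ht hta
  rw [← ZMod.intCast_zmod_eq_zero_iff_dvd]
  have htv : ((t : ℤ) : ZMod P) =
      (-(ε : ZMod P) - (α : ZMod P) * B ^ ρ) * (B ^ (u + ρ))⁻¹ := by
    have := (ZMod.intCast_eq_intCast_iff _ _ _).mpr hta
    rw [this]
    push_cast
    exact ZMod.natCast_rightInverse _
  have hBt : B ^ t = B ^ u := pow_eq_of_modEq B U hBU ht
  have hne : B ^ (u + ρ) ≠ 0 := pow_ne_zero _ hb
  push_cast
  push_cast at htv
  rw [hBt, htv]
  field_simp
  ring

lemma order_facts (P w : ℕ) (hP : P.Prime) (b : ℤ) (hw : 0 < w)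
    (hdvd : (P : ℤ) ∣ b ^ w - 1)
    (hprim : ∀ ℓ : ℕ, 1 ≤ ℓ → ℓ < w → ¬ (P : ℤ) ∣ b ^ ℓ - 1) :
    (b : ZMod P) ≠ 0 ∧ (b : ZMod P) ^ w = 1 ∧ orderOf (b : ZMod P) = w := by
  haveI := Fact.mk hP
  set B := (b : ZMod P) with hB
  have hBw : B ^ w = 1 := by
    have := (ZMod.intCast_zmod_eq_zero_iff_dvd _ P).mpr hdvd
    push_cast at this
    rw [sub_eq_zero] at this
    exact this
  have hBne : B ≠ 0 := by
    intro h
    rw [h, zero_pow hw.ne'] at hBw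
    exact zero_ne_one hBw
  refine ⟨hBne, hBw, ?_⟩
  have hdvd' : orderOf B ∣ w := orderOf_dvd_of_pow_eq_one hBw
  have hfin : IsOfFinOrder B := isOfFinOrder_iff_pow_eq_one.mpr ⟨w, hw, hBw⟩
  have hpos : 0 < orderOf B := hfin.orderOf_pos
  have hle : orderOf B ≤ w := Nat.le_of_dvd hw hdvd'
  rcases lt_or_eq_of_le hle with hlt | heq
  · exfalso
    apply hprim (orderOf B) hpos hlt
    rw [← ZMod.intCast_zmod_eq_zero_iff_dvd]
    push_cast
    rw [sub_eq_zero]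
    exact pow_orderOf_eq_one B
  · exact heq

lemma prime_dvd_lcm {k m n : ℕ} (hk : k.Prime) (h : ¬ k ∣ m) (h' : ¬ k ∣ n) :
    Nat.Coprime k (Nat.lcm m n) := by
  rcases Nat.eq_zero_or_pos m with rfl | hm
  · simp at h
  rcases Nat.eq_zero_or_pos n with rfl | hn
  · simp at h'
  have : ¬ k ∣ Nat.lcm m n := by
    intro hdvd
    have := hdvd.trans (Nat.lcm_dvd_mul m n)
    rcases (Nat.Prime.dvd_mul hk).mp this with h1 | h1
    exacts [h h1, h' h1]
  exact (Nat.Prime.coprime_iff_not_dvd hk).mpr this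

set_option maxHeartbeats 1000000 in
theorem brier_of_coverings
    (b : ℤ) (hb : 3 ≤ b) (hb2 : ¬ ∃ n : ℕ, b + 1 = 2 ^ n)
    (α : ℤ) (hα : α ≠ 0)
    (q : ℕ) (hq : q.Prime) (hq5 : 5 ≤ q)
    (r : ℕ → ℕ → ℕ → ℤ)
    -- (i) the first covering system, with moduli 2^j (1 ≤ j ≤ q) and 2^j * q (0 ≤ j ≤ q)
    (hcov₁ : ∀ n : ℤ,
      (∃ j, 1 ≤ j ∧ j ≤ q ∧ n ≡ r j 0 0 [ZMOD (2 : ℤ) ^ j]) ∨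
      (∃ j, j ≤ q ∧ n ≡ r j 0 1 [ZMOD (2 : ℤ) ^ j * q]))
    -- (ii) the second covering system, with moduli 2^j * 3^k * q^j'
    (hcov₂ : ∀ n : ℤ, ∃ j k j', j ≤ q ∧ 1 ≤ k ∧ k ≤ q ∧ j' ≤ 1 ∧
      n ≡ r j k j' [ZMOD (2 : ℤ) ^ j * 3 ^ k * (q : ℤ) ^ j'])
    -- (iii) the primes, indexed by the exponent triples of both systems
    (S : Finset (ℕ × ℕ × ℕ))
    (hS : S = ((Finset.Icc 1 q).image fun j => (j, 0, 0)) ∪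
      ((Finset.Iic q).image fun j => (j, 0, 1)) ∪
      (Finset.Iic q ×ˢ Finset.Icc 1 q ×ˢ Finset.Iic 1))
    (p : ℕ → ℕ → ℕ → ℕ)
    (hp : ∀ x ∈ S, IsPrimitivePrimeDiv b
      (2 ^ x.1 * 3 ^ x.2.1 * q ^ x.2.2) (p x.1 x.2.1 x.2.2))
    (hdist : Set.InjOn (fun x : ℕ × ℕ × ℕ => p x.1 x.2.1 x.2.2) ↑S)
    (Pmax M : ℕ)
    (hPmax : Pmax = S.sup (fun x => p x.1 x.2.1 x.2.2))
    (hM : M = Nat.lcm (2 ^ q) (Nat.lcm (3 ^ q) (Nat.lcm (b - 1).toNat (Nat.lcm q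
      (S.lcm (fun x => p x.1 x.2.1 x.2.2)))))) :
    ∃ T : ℤ, ∀ t : ℕ, 0 < t → (t : ℤ) ≡ T [ZMOD (M : ℤ)] →
      (Pmax : ℤ) ≤ ((t : ℤ) * b ^ t + α) * b + 1 →
      IsBBrier b ((t : ℤ) * b ^ t + α) := by
  classical
  set pp : ℕ × ℕ × ℕ → ℕ := fun x => p x.1 x.2.1 x.2.2 with hpp
  set ww : ℕ × ℕ × ℕ → ℕ := fun x => 2 ^ x.1 * 3 ^ x.2.1 * q ^ x.2.2 with hww
  set rr : ℕ × ℕ × ℕ → ℤ := fun x => r x.1 x.2.1 x.2.2 with hrr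
  set ρ : ℕ × ℕ × ℕ → ℕ := fun x => ((rr x) % ((ww x : ℕ) : ℤ)).toNat with hρ
  -- membership characterization
  have memS : ∀ x : ℕ × ℕ × ℕ, x ∈ S ↔
      ((1 ≤ x.1 ∧ x.1 ≤ q ∧ x.2.1 = 0 ∧ x.2.2 = 0) ∨
       (x.1 ≤ q ∧ x.2.1 = 0 ∧ x.2.2 = 1) ∨
       (x.1 ≤ q ∧ (1 ≤ x.2.1 ∧ x.2.1 ≤ q) ∧ x.2.2 ≤ 1)) := by
    rintro ⟨j, k, i⟩
    rw [hS]
    simp only [Finset.mem_union, Finset.mem_image, Finset.mem_product, Finset.mem_Icc,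
      Finset.mem_Iic, Prod.mk.injEq]
    constructor
    · rintro ((⟨a, ⟨h1, h2⟩, rfl, rfl, rfl⟩ | ⟨a, h1, rfl, rfl, rfl⟩) | ⟨h1, h2, h3⟩)
      · exact Or.inl ⟨h1, h2, rfl, rfl⟩
      · exact Or.inr (Or.inl ⟨h1, rfl, rfl⟩)
      · exact Or.inr (Or.inr ⟨h1, h2, h3⟩)
    · rintro (⟨h1, h2, h3, h4⟩ | ⟨h1, h2, h3⟩ | ⟨h1, h2, h3⟩)
      · exact Or.inl (Or.inl ⟨j, ⟨h1, h2⟩, rfl, h3.symm, h4.symm⟩)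
      · exact Or.inl (Or.inr ⟨j, h1, rfl, h2.symm, h3.symm⟩)
      · exact Or.inr ⟨h1, h2, h3⟩
  -- basic facts about w
  have hw2 : ∀ x ∈ S, 2 ≤ ww x := by
    intro x hx
    rcases (memS x).mp hx with ⟨h1, _, h3, h4⟩ | ⟨_, h3, h4⟩ | ⟨_, ⟨h2, _⟩, _⟩
    · have : (2:ℕ)^1 ≤ 2 ^ x.1 := Nat.pow_le_pow_right (by norm_num) h1
      simp only [hww, h3, h4, pow_zero, mul_one]
      omega
    · have h2 : 1 ≤ 2 ^ x.1 := Nat.one_le_two_pow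
      simp only [hww, h3, h4, pow_zero, pow_one, one_mul, mul_one]
      nlinarith
    · have ha : 1 ≤ 2 ^ x.1 := Nat.one_le_two_pow
      have hbb : (3:ℕ)^1 ≤ 3 ^ x.2.1 := Nat.pow_le_pow_right (by norm_num) h2
      have hc : 1 ≤ q ^ x.2.2 := Nat.one_le_pow _ _ (by omega)
      calc 2 ≤ 1 * 3 * 1 := by norm_num
        _ ≤ 2 ^ x.1 * 3 ^ x.2.1 * q ^ x.2.2 := by
            apply Nat.mul_le_mul (Nat.mul_le_mul ha (by simpa using hbb)) hc
  have hwpos : ∀ x ∈ S, 0 < ww x := fun x hx => lt_of_lt_of_le (by norm_num) (hw2 x hx)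
  -- prime facts
  have hPx : ∀ x ∈ S, (pp x).Prime := fun x hx => (hp x hx).1
  have hOrd : ∀ x ∈ S, (b : ZMod (pp x)) ≠ 0 ∧ (b : ZMod (pp x)) ^ (ww x) = 1 ∧
      orderOf (b : ZMod (pp x)) = ww x := by
    intro x hx
    exact order_facts (pp x) (ww x) (hPx x hx) b (hwpos x hx) (hp x hx).2.1 (hp x hx).2.2
  have hPnd : ∀ x ∈ S, ¬ (pp x : ℤ) ∣ b - 1 := by
    intro x hx hdvd
    apply (hp x hx).2.2 1 le_rfl (hw2 x hx)
    simpa using hdvd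
  have hPodd : ∀ x ∈ S, pp x ≠ 2 := by
    intro x hx h2
    apply hPnd x hx
    have hBne := (hOrd x hx).1
    rw [h2] at hBne ⊢
    have hb1 : (b : ZMod 2) = 1 := by
      have : ∀ a : ZMod 2, a = 0 ∨ a = 1 := by decide
      rcases this (b : ZMod 2) with h | h
      · exact absurd h hBne
      · exact h
    rw [← ZMod.intCast_zmod_eq_zero_iff_dvd]
    push_cast
    rw [hb1, sub_self]
  -- W and its relation to the moduli
  set W : ℕ := 2 ^ q * 3 ^ q * q with hW
  have hwdvdW : ∀ x ∈ S, ww x ∣ W := by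
    intro x hx
    have hjq : x.1 ≤ q ∧ x.2.1 ≤ q ∧ x.2.2 ≤ 1 := by
      rcases (memS x).mp hx with ⟨_, h2, h3, h4⟩ | ⟨h1, h3, h4⟩ | ⟨h1, ⟨_, h2⟩, h3⟩ <;>
        refine ⟨by omega, by omega, by omega⟩
    have : q ^ x.2.2 ∣ q ^ 1 := pow_dvd_pow q hjq.2.2
    exact mul_dvd_mul (mul_dvd_mul (pow_dvd_pow 2 hjq.1) (pow_dvd_pow 3 hjq.2.1))
      (by simpa using this)
  -- the maximum prime
  have hx6S : ((1, 1, 0) : ℕ × ℕ × ℕ) ∈ S := (memS _).mpr (Or.inr (Or.inr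
    ⟨(by omega : (1:ℕ) ≤ q), ⟨le_rfl, (by omega : (1:ℕ) ≤ q)⟩, (by omega : (0:ℕ) ≤ 1)⟩))
  have hSne : S.Nonempty := ⟨_, hx6S⟩
  obtain ⟨xmax, hxmaxS, hxmaxsup⟩ := Finset.exists_mem_eq_sup S hSne pp
  have hPmaxeq : Pmax = pp xmax := by rw [hPmax]; exact hxmaxsup
  have hle_Pmax : ∀ x ∈ S, pp x ≤ Pmax := by
    intro x hx; rw [hPmax]; exact Finset.le_sup hx
  -- Pmax ≥ 7
  have hPmax7 : 7 ≤ Pmax := by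
    have hx6 := hOrd _ hx6S
    haveI : Fact (pp (1,1,0)).Prime := Fact.mk (hPx _ hx6S)
    have hferm : orderOf ((b : ZMod (pp (1,1,0)))) ∣ pp (1,1,0) - 1 :=
      orderOf_dvd_of_pow_eq_one (ZMod.pow_card_sub_one_eq_one hx6.1)
    rw [hx6.2.2] at hferm
    have hw6 : ww (1,1,0) = 6 := by simp [hww]
    rw [hw6] at hferm
    have hple : pp (1,1,0) ≤ Pmax := hle_Pmax _ hx6S
    have hp2 : 2 ≤ pp (1,1,0) := (hPx _ hx6S).two_le
    have : 6 ≤ pp (1,1,0) - 1 := Nat.le_of_dvd (by omega) hferm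
    omega
  have hPmaxOdd : Odd Pmax := by
    rw [hPmaxeq]
    exact (hPx _ hxmaxS).odd_of_ne_two (hPodd _ hxmaxS)
  have hPmaxPrime : Pmax.Prime := by rw [hPmaxeq]; exact hPx _ hxmaxS
  -- configuration
  set D : Prop := (b ∣ (Pmax : ℤ) - 1) with hD
  set PS : Prop := ((xmax.2.1 = 0) ↔ ¬ D) with hPS
  set ε : ℕ × ℕ × ℕ → ℤ := fun x => if (x.2.1 = 0) ↔ PS then 1 else -1 with hε
  have hεcases : ∀ x, ε x = 1 ∨ ε x = -1 := by
    intro x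
    by_cases h : (x.2.1 = 0) ↔ PS
    · left; simp [hε, h]
    · right; simp [hε, h]
  have hε1 : ∀ x, ((x.2.1 = 0) ↔ PS) → ε x = 1 := by intro x h; simp [hε, h]
  have hεm1 : ∀ x, ¬((x.2.1 = 0) ↔ PS) → ε x = -1 := by intro x h; simp [hε, h]
  have hε1' : ∀ x, ε x = 1 → ((x.2.1 = 0) ↔ PS) := by
    intro x h
    by_contra hc
    rw [hεm1 x hc] at h
    norm_num at h
  have hεm1' : ∀ x, ε x = -1 → ¬((x.2.1 = 0) ↔ PS) := by
    intro x h
    by_contra hc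
    rw [hε1 x hc] at h
    norm_num at h
  -- moduli chain
  have hβnn : (0:ℤ) ≤ b - 1 := by linarith
  set βn : ℕ := (b - 1).toNat with hβn
  have hβ : ((βn : ℕ) : ℤ) = b - 1 := Int.toNat_of_nonneg hβnn
  have hβpos : 0 < βn := by
    have : (2:ℤ) ≤ b - 1 := by linarith
    omega
  set M₀ : ℕ := Nat.lcm βn (2 ^ q) with hM₀
  set M₁ : ℕ := Nat.lcm M₀ (3 ^ q) with hM₁
  set M₂ : ℕ := Nat.lcm M₁ q with hM₂
  have h2qpos : 0 < 2 ^ q := pow_pos (by norm_num) q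
  have h3qpos : 0 < 3 ^ q := pow_pos (by norm_num) q
  have hqpos : 0 < q := by omega
  have hM₀pos : 0 < M₀ := Nat.lcm_pos hβpos h2qpos
  have hM₁pos : 0 < M₁ := Nat.lcm_pos hM₀pos h3qpos
  have hM₂pos : 0 < M₂ := Nat.lcm_pos hM₁pos hqpos
  have hβM₀ : βn ∣ M₀ := Nat.dvd_lcm_left _ _
  have h2qM₀ : 2 ^ q ∣ M₀ := Nat.dvd_lcm_right _ _
  have hM₀M₁ : M₀ ∣ M₁ := Nat.dvd_lcm_left _ _
  have h3qM₁ : 3 ^ q ∣ M₁ := Nat.dvd_lcm_right _ _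
  have hM₁M₂ : M₁ ∣ M₂ := Nat.dvd_lcm_left _ _
  have hqM₂ : q ∣ M₂ := Nat.dvd_lcm_right _ _
  -- divisibilities into M
  have h2M : 2 ^ q ∣ M := by rw [hM]; exact Nat.dvd_lcm_left _ _
  have h3M : 3 ^ q ∣ M := by
    rw [hM]; exact (Nat.dvd_lcm_left _ _).trans (Nat.dvd_lcm_right _ _)
  have hβM : βn ∣ M := by
    rw [hM]
    exact ((Nat.dvd_lcm_left _ _).trans (Nat.dvd_lcm_right _ _)).trans (Nat.dvd_lcm_right _ _)
  have hqM : q ∣ M := by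
    rw [hM]
    exact (((Nat.dvd_lcm_left _ _).trans (Nat.dvd_lcm_right _ _)).trans
      (Nat.dvd_lcm_right _ _)).trans (Nat.dvd_lcm_right _ _)
  have hpM : ∀ x ∈ S, pp x ∣ M := by
    intro x hx
    rw [hM]
    exact (((Finset.dvd_lcm hx).trans (Nat.dvd_lcm_right _ _)).trans
      (Nat.dvd_lcm_right _ _)).trans ((Nat.dvd_lcm_right _ _).trans (Nat.dvd_lcm_right _ _))
  have hM₂M : M₂ ∣ M := Nat.lcm_dvd (Nat.lcm_dvd (Nat.lcm_dvd hβM h2M) h3M) hqM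
  have cop23 : Nat.Coprime (2 ^ q) (3 ^ q) := Nat.Coprime.pow q q (by norm_num)
  have copq2 : Nat.Coprime q 2 := (Nat.coprime_primes hq Nat.prime_two).mpr (by omega)
  have copq3 : Nat.Coprime q 3 := (Nat.coprime_primes hq Nat.prime_three).mpr (by omega)
  have hW2M₁ : 2 ^ q * 3 ^ q ∣ M₁ :=
    Nat.Coprime.mul_dvd_of_dvd_of_dvd cop23 (h2qM₀.trans hM₀M₁) h3qM₁
  have copW2q : Nat.Coprime (2 ^ q * 3 ^ q) q :=
    Nat.coprime_mul_iff_left.mpr ⟨(copq2.pow_right q).symm, (copq3.pow_right q).symm⟩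
  have hWM₂ : W ∣ M₂ :=
    Nat.Coprime.mul_dvd_of_dvd_of_dvd copW2q (hW2M₁.trans hM₁M₂) hqM₂
  -- canonical residue mod 2^q
  have h2qZ : ((2 ^ q : ℕ) : ℤ) ≠ 0 := by positivity
  set u₂ : ℕ := ((-α) % ((2 ^ q : ℕ) : ℤ)).toNat with hu₂
  have hu₂cast : ((u₂ : ℕ) : ℤ) = (-α) % ((2 ^ q : ℕ) : ℤ) :=
    Int.toNat_of_nonneg (Int.emod_nonneg _ h2qZ)
  -- Step 1 : the possible prime 3
  have H1 : ∃ T₁ : ℤ, T₁ ≡ -α [ZMOD (M₀ : ℤ)] ∧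
      ∀ t : ℕ, (t : ℤ) ≡ T₁ [ZMOD (M₁ : ℤ)] → ∀ x ∈ S, pp x = 3 →
        (pp x : ℤ) ∣ ((t : ℤ) * b ^ t + α) * b ^ ρ x + ε x := by
    by_cases h3 : ∃ x ∈ S, pp x = 3
    · obtain ⟨x₃, hx₃S, hx₃3⟩ := h3
      obtain ⟨hBne, hBw, hBord⟩ := hOrd x₃ hx₃S
      haveI : Fact (pp x₃).Prime := Fact.mk (hPx x₃ hx₃S)
      have hferm : orderOf ((b : ZMod (pp x₃))) ∣ pp x₃ - 1 :=
        orderOf_dvd_of_pow_eq_one (ZMod.pow_card_sub_one_eq_one hBne)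
      have hferm' : orderOf ((b : ZMod (pp x₃))) ∣ 2 := by
        rwa [show pp x₃ - 1 = 2 from by omega] at hferm
      have hBU : (b : ZMod (pp x₃)) ^ (2 ^ q) = 1 := by
        apply orderOf_dvd_iff_pow_eq_one.mp
        exact hferm'.trans (dvd_pow_self 2 (by omega))
      obtain ⟨a₃, ha₃⟩ := step_lemma (pp x₃) (hPx x₃ hx₃S) b α (ε x₃) hBne (2 ^ q) u₂ (ρ x₃) hBU
      have h3βn : ¬ (3:ℕ) ∣ βn := by
        intro hdv
        apply hPnd x₃ hx₃S
        rw [hx₃3, ← hβ]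
        exact_mod_cast hdv
      have h32q : ¬ (3:ℕ) ∣ 2 ^ q := by
        intro h
        have := Nat.Prime.dvd_of_dvd_pow Nat.prime_three h
        omega
      have hcop : Nat.Coprime (3 ^ q) M₀ :=
        Nat.Coprime.pow_left q (prime_dvd_lcm Nat.prime_three h3βn h32q)
      obtain ⟨T₁, hT₁a, hT₁b⟩ := crt2 (M₀ : ℤ) ((3 ^ q : ℕ) : ℤ) (-α) a₃ (by
        have hg : Int.gcd (M₀ : ℤ) ((3 ^ q : ℕ) : ℤ) = 1 := by
          rw [Int.gcd_natCast_natCast]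
          exact hcop.symm
        rw [hg]
        simpa using Int.modEq_one)
      refine ⟨T₁, hT₁a, ?_⟩
      intro t ht x hxS hx3
      have hxx : x = x₃ :=
        hdist (Finset.mem_coe.mpr hxS) (Finset.mem_coe.mpr hx₃S) (hx3.trans hx₃3.symm)
      subst hxx
      apply ha₃ t
      · apply nat_modEq_of_int
        have h1 : (t:ℤ) ≡ T₁ [ZMOD ((2 ^ q : ℕ) : ℤ)] :=
          ht.of_dvd (by exact_mod_cast (h2qM₀.trans hM₀M₁))
        have h2 : T₁ ≡ -α [ZMOD ((2 ^ q : ℕ) : ℤ)] := hT₁a.of_dvd (by exact_mod_cast h2qM₀)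
        have h3' : (-α) % ((2 ^ q : ℕ) : ℤ) ≡ -α [ZMOD ((2 ^ q : ℕ) : ℤ)] :=
          Int.emod_emod_of_dvd _ dvd_rfl
        rw [hu₂cast]
        exact (h1.trans h2).trans h3'.symm
      · have h1 : (t:ℤ) ≡ T₁ [ZMOD ((pp x : ℕ) : ℤ)] := by
          apply ht.of_dvd
          have : pp x ∣ M₁ := by
            rw [hx3]
            exact (dvd_pow_self 3 (by omega : q ≠ 0)).trans h3qM₁
          exact_mod_cast this
        have h2 : T₁ ≡ a₃ [ZMOD ((pp x : ℕ) : ℤ)] := by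
          apply hT₁b.of_dvd
          have : pp x ∣ 3 ^ q := by rw [hx3]; exact dvd_pow_self 3 (by omega : q ≠ 0)
          exact_mod_cast this
        exact h1.trans h2
    · exact ⟨-α, Int.ModEq.refl _, fun t ht x hxS hx3 => absurd ⟨x, hxS, hx3⟩ h3⟩
  obtain ⟨T₁, hT₁α, hT₁D⟩ := H1
  have hW23M₁ : (2 ^ q * 3 ^ q) ∣ M₁ := hW2M₁
  have hW23Z : ((2 ^ q * 3 ^ q : ℕ) : ℤ) ≠ 0 := by positivity
  set u₃ : ℕ := (T₁ % ((2 ^ q * 3 ^ q : ℕ) : ℤ)).toNat with hu₃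
  have hu₃cast : ((u₃ : ℕ) : ℤ) = T₁ % ((2 ^ q * 3 ^ q : ℕ) : ℤ) :=
    Int.toNat_of_nonneg (Int.emod_nonneg _ hW23Z)
  -- Step 2 : the possible prime q
  have H2 : ∃ T₂ : ℤ, T₂ ≡ T₁ [ZMOD (M₁ : ℤ)] ∧
      ∀ t : ℕ, (t : ℤ) ≡ T₂ [ZMOD (M₂ : ℤ)] → ∀ x ∈ S, pp x = q →
        (pp x : ℤ) ∣ ((t : ℤ) * b ^ t + α) * b ^ ρ x + ε x := by
    by_cases hq3 : ∃ x ∈ S, pp x = q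
    · obtain ⟨xq, hxqS, hxqq⟩ := hq3
      obtain ⟨hBne, hBw, hBord⟩ := hOrd xq hxqS
      haveI : Fact (pp xq).Prime := Fact.mk (hPx xq hxqS)
      have hferm : orderOf ((b : ZMod (pp xq))) ∣ pp xq - 1 :=
        orderOf_dvd_of_pow_eq_one (ZMod.pow_card_sub_one_eq_one hBne)
      have hferm' : ww xq ∣ q - 1 := by
        rw [← hBord]
        rwa [show pp xq - 1 = q - 1 from by rw [hxqq]] at hferm
      have hqnd : ¬ q ∣ ww xq := by
        intro h
        have := Nat.le_of_dvd (by omega) (h.trans hferm')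
        omega
      have hx20 : xq.2.2 = 0 := by
        rcases (memS xq).mp hxqS with ⟨_, _, _, h4⟩ | ⟨_, _, h4⟩ | ⟨_, _, h4⟩
        · exact h4
        · exfalso
          apply hqnd
          rw [hww]
          simp only [h4, pow_one]
          exact dvd_mul_left q _
        · rcases Nat.le_one_iff_eq_zero_or_eq_one.mp h4 with h | h
          · exact h
          · exfalso
            apply hqnd
            rw [hww]
            simp only [h, pow_one]
            exact dvd_mul_left q _
      have hwdvd23 : ww xq ∣ 2 ^ q * 3 ^ q := by
        have hjk : xq.1 ≤ q ∧ xq.2.1 ≤ q := by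
          rcases (memS xq).mp hxqS with ⟨_, h2, h3, _⟩ | ⟨h1, h3, _⟩ | ⟨h1, ⟨_, h2⟩, _⟩ <;>
            constructor <;> omega
        rw [hww]
        simp only [hx20, pow_zero, mul_one]
        exact mul_dvd_mul (pow_dvd_pow 2 hjk.1) (pow_dvd_pow 3 hjk.2)
      have hBU : (b : ZMod (pp xq)) ^ (2 ^ q * 3 ^ q) = 1 := by
        apply orderOf_dvd_iff_pow_eq_one.mp
        rw [hBord]
        exact hwdvd23
      obtain ⟨aq, haq⟩ := step_lemma (pp xq) (hPx xq hxqS) b α (ε xq) hBne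
        (2 ^ q * 3 ^ q) u₃ (ρ xq) hBU
      have hqβn : ¬ q ∣ βn := by
        intro hdv
        apply hPnd xq hxqS
        rw [hxqq, ← hβ]
        exact_mod_cast hdv
      have hcopqM₁ : Nat.Coprime q M₁ := by
        apply prime_dvd_lcm hq
        · intro h
          rcases (Nat.Prime.dvd_mul hq).mp (h.trans (Nat.lcm_dvd_mul _ _)) with h' | h'
          · exact hqβn h'
          · have := Nat.le_of_dvd (by norm_num) (Nat.Prime.dvd_of_dvd_pow hq h')
            omega
        · intro h
          have := Nat.le_of_dvd (by norm_num) (Nat.Prime.dvd_of_dvd_pow hq h)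
          omega
      obtain ⟨T₂, hT₂a, hT₂b⟩ := crt2 (M₁ : ℤ) ((q : ℕ) : ℤ) T₁ aq (by
        have hg : Int.gcd (M₁ : ℤ) ((q : ℕ) : ℤ) = 1 := by
          rw [Int.gcd_natCast_natCast]
          exact hcopqM₁.symm
        rw [hg]
        simpa using Int.modEq_one)
      refine ⟨T₂, hT₂a, ?_⟩
      intro t ht x hxS hxq'
      have hxx : x = xq :=
        hdist (Finset.mem_coe.mpr hxS) (Finset.mem_coe.mpr hxqS) (hxq'.trans hxqq.symm)
      subst hxx
      apply haq t
      · apply nat_modEq_of_int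
        have h1 : (t:ℤ) ≡ T₂ [ZMOD ((2 ^ q * 3 ^ q : ℕ) : ℤ)] :=
          ht.of_dvd (by exact_mod_cast (hW23M₁.trans hM₁M₂))
        have h2 : T₂ ≡ T₁ [ZMOD ((2 ^ q * 3 ^ q : ℕ) : ℤ)] := hT₂a.of_dvd (by exact_mod_cast hW23M₁)
        have h3' : T₁ % ((2 ^ q * 3 ^ q : ℕ) : ℤ) ≡ T₁ [ZMOD ((2 ^ q * 3 ^ q : ℕ) : ℤ)] :=
          Int.emod_emod_of_dvd _ dvd_rfl
        rw [hu₃cast]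
        exact (h1.trans h2).trans h3'.symm
      · have h1 : (t:ℤ) ≡ T₂ [ZMOD ((pp x : ℕ) : ℤ)] := by
          apply ht.of_dvd
          have : pp x ∣ M₂ := by rw [hxq']; exact hqM₂
          exact_mod_cast this
        have h2 : T₂ ≡ aq [ZMOD ((pp x : ℕ) : ℤ)] := by
          rw [hxq']
          exact hT₂b
        exact h1.trans h2
    · exact ⟨T₁, Int.ModEq.refl _, fun t ht x hxS hxq' => absurd ⟨x, hxS, hxq'⟩ hq3⟩
  obtain ⟨T₂, hT₂T₁, hT₂D⟩ := H2
  set S' : Finset (ℕ × ℕ × ℕ) := S.filter (fun x => pp x ≠ 3 ∧ pp x ≠ q) with hS'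
  have hS'S : ∀ x ∈ S', x ∈ S := fun x hx => (Finset.mem_filter.mp hx).1
  have hcopM₂ : ∀ x ∈ S', Nat.Coprime (pp x) M₂ := by
    intro x hx
    obtain ⟨hxS, hx3, hxq⟩ := Finset.mem_filter.mp hx
    have hPxp := hPx x hxS
    apply prime_dvd_lcm hPxp
    · intro h
      rcases (Nat.Prime.dvd_mul hPxp).mp (h.trans (Nat.lcm_dvd_mul _ _)) with h' | h'
      · rcases (Nat.Prime.dvd_mul hPxp).mp (h'.trans (Nat.lcm_dvd_mul _ _)) with h'' | h''
        · apply hPnd x hxS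
          rw [← hβ]
          exact_mod_cast h''
        · have := (Nat.prime_dvd_prime_iff_eq hPxp Nat.prime_two).mp
            (Nat.Prime.dvd_of_dvd_pow hPxp h'')
          exact hPodd x hxS this
      · exact hx3 ((Nat.prime_dvd_prime_iff_eq hPxp Nat.prime_three).mp
          (Nat.Prime.dvd_of_dvd_pow hPxp h'))
    · intro h
      exact hxq ((Nat.prime_dvd_prime_iff_eq hPxp hq).mp h)
  have hWZ : ((W : ℕ) : ℤ) ≠ 0 := by
    have : 0 < W := by positivity
    exact_mod_cast this.ne'
  set u₄ : ℕ := (T₂ % ((W : ℕ) : ℤ)).toNat with hu₄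
  have hu₄cast : ((u₄ : ℕ) : ℤ) = T₂ % ((W : ℕ) : ℤ) :=
    Int.toNat_of_nonneg (Int.emod_nonneg _ hWZ)
  have GEN : ∀ F : Finset (ℕ × ℕ × ℕ), F ⊆ S' → ∃ T₃ : ℤ, ∃ M₃ : ℕ, 0 < M₃ ∧ M₂ ∣ M₃ ∧
      M₃ ∣ M ∧ T₃ ≡ T₂ [ZMOD (M₂ : ℤ)] ∧
      (∀ x ∈ S', x ∉ F → Nat.Coprime (pp x) M₃) ∧
      (∀ x ∈ F, ∀ t : ℕ, (t : ℤ) ≡ T₃ [ZMOD (M₃ : ℤ)] →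
        (pp x : ℤ) ∣ ((t : ℤ) * b ^ t + α) * b ^ ρ x + ε x) := by
    intro F
    induction F using Finset.induction_on with
    | empty =>
      intro _
      exact ⟨T₂, M₂, hM₂pos, dvd_rfl, hM₂M, Int.ModEq.refl _,
        fun x hx _ => hcopM₂ x hx, by simp⟩
    | @insert a F ha IH =>
      intro hsub
      have haS' : a ∈ S' := hsub (Finset.mem_insert_self a F)
      have haS : a ∈ S := hS'S a haS'
      obtain ⟨T₃, M₃, hpos, hM₂d, hdM, hTT₂, hcop, hDcond⟩ :=
        IH (fun x hx => hsub (Finset.mem_insert_of_mem hx))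
      have hcopa : Nat.Coprime (pp a) M₃ := hcop a haS' ha
      obtain ⟨hBne, hBw, hBord⟩ := hOrd a haS
      have hBU : (b : ZMod (pp a)) ^ W = 1 := by
        obtain ⟨c, hc⟩ := hwdvdW a haS
        rw [hc, pow_mul, hBw, one_pow]
      obtain ⟨A, hA⟩ := step_lemma (pp a) (hPx a haS) b α (ε a) hBne W u₄ (ρ a) hBU
      obtain ⟨T₄, hT₄₃, hT₄a⟩ := crt2 (M₃ : ℤ) ((pp a : ℕ) : ℤ) T₃ A (by
        have hg : Int.gcd (M₃ : ℤ) ((pp a : ℕ) : ℤ) = 1 := by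
          rw [Int.gcd_natCast_natCast]
          exact hcopa.symm
        rw [hg]
        simpa using Int.modEq_one)
      have hWM₃ : W ∣ M₃ := hWM₂.trans hM₂d
      refine ⟨T₄, M₃ * pp a, Nat.mul_pos hpos (hPx a haS).pos,
        hM₂d.trans (dvd_mul_right _ _),
        Nat.Coprime.mul_dvd_of_dvd_of_dvd hcopa.symm hdM (hpM a haS),
        (hT₄₃.of_dvd (by exact_mod_cast hM₂d)).trans hTT₂, ?_, ?_⟩
      · intro x hx hxmem
        have hx_ne : x ≠ a := fun h => hxmem (h ▸ Finset.mem_insert_self a F)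
        have hxF : x ∉ F := fun h => hxmem (Finset.mem_insert_of_mem h)
        refine Nat.Coprime.mul_right (hcop x hx hxF) ?_
        refine (Nat.coprime_primes (hPx x (hS'S x hx)) (hPx a haS)).mpr ?_
        intro h
        exact hx_ne (hdist (Finset.mem_coe.mpr (hS'S x hx)) (Finset.mem_coe.mpr haS) h)
      · intro x hx t ht
        have htM₃ : (t : ℤ) ≡ T₄ [ZMOD (M₃ : ℤ)] :=
          ht.of_dvd (by exact_mod_cast (dvd_mul_right M₃ (pp a)))
        rcases Finset.mem_insert.mp hx with rfl | hxF
        · apply hA t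
          · apply nat_modEq_of_int
            have h1 : (t:ℤ) ≡ T₄ [ZMOD ((W : ℕ) : ℤ)] :=
              ht.of_dvd (by exact_mod_cast (hWM₃.trans (dvd_mul_right M₃ (pp x))))
            have h2 : T₄ ≡ T₃ [ZMOD ((W : ℕ) : ℤ)] := hT₄₃.of_dvd (by exact_mod_cast hWM₃)
            have h3' : T₃ ≡ T₂ [ZMOD ((W : ℕ) : ℤ)] :=
              hTT₂.of_dvd (by exact_mod_cast hWM₂)
            have h4 : T₂ % ((W : ℕ) : ℤ) ≡ T₂ [ZMOD ((W : ℕ) : ℤ)] :=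
              Int.emod_emod_of_dvd _ dvd_rfl
            rw [hu₄cast]
            exact ((h1.trans h2).trans h3').trans h4.symm
          · have h1 : (t:ℤ) ≡ T₄ [ZMOD ((pp x : ℕ) : ℤ)] :=
              ht.of_dvd (by exact_mod_cast (dvd_mul_left (pp x) M₃))
            exact h1.trans hT₄a
        · exact hDcond x hxF t (htM₃.trans hT₄₃)
  obtain ⟨T₃, M₃, hM₃pos, hM₂M₃, hM₃M, hT₃T₂, _, hGenD⟩ := GEN S' (Finset.Subset.refl _)
  -- covering dispatchers
  have coverPlus : ∀ n : ℤ, ∃ x ∈ S, ((x.2.1 = 0) ↔ PS) ∧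
      n ≡ rr x [ZMOD ((ww x : ℕ) : ℤ)] := by
    intro n
    by_cases hPSh : PS
    · rcases hcov₁ n with ⟨j, hj1, hjq, hc⟩ | ⟨j, hjq, hc⟩
      · refine ⟨(j, 0, 0), (memS _).mpr (Or.inl ⟨hj1, hjq, rfl, rfl⟩),
          iff_of_true rfl hPSh, ?_⟩
        have hmod : ((ww (j,0,0) : ℕ) : ℤ) = (2:ℤ) ^ j := by
          rw [hww]; push_cast; ring
        rw [hmod]; exact hc
      · refine ⟨(j, 0, 1), (memS _).mpr (Or.inr (Or.inl ⟨hjq, rfl, rfl⟩)),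
          iff_of_true rfl hPSh, ?_⟩
        have hmod : ((ww (j,0,1) : ℕ) : ℤ) = (2:ℤ) ^ j * q := by
          rw [hww]; push_cast; ring
        rw [hmod]; exact hc
    · obtain ⟨j, k, i, hjq, hk1, hkq, hi, hc⟩ := hcov₂ n
      refine ⟨(j, k, i), (memS _).mpr (Or.inr (Or.inr ⟨hjq, ⟨hk1, hkq⟩, hi⟩)),
        iff_of_false (by omega : ¬ (k = 0)) hPSh, ?_⟩
      have hmod : ((ww (j,k,i) : ℕ) : ℤ) = (2:ℤ) ^ j * 3 ^ k * (q:ℤ) ^ i := by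
        rw [hww]; push_cast; ring
      rw [hmod]; exact hc
  have coverMinus : ∀ n : ℤ, ∃ x ∈ S, ¬((x.2.1 = 0) ↔ PS) ∧
      n ≡ rr x [ZMOD ((ww x : ℕ) : ℤ)] := by
    intro n
    by_cases hPSh : PS
    · obtain ⟨j, k, i, hjq, hk1, hkq, hi, hc⟩ := hcov₂ n
      refine ⟨(j, k, i), (memS _).mpr (Or.inr (Or.inr ⟨hjq, ⟨hk1, hkq⟩, hi⟩)),
        fun h => (by omega : ¬ (k = 0)) (h.mpr hPSh), ?_⟩
      have hmod : ((ww (j,k,i) : ℕ) : ℤ) = (2:ℤ) ^ j * 3 ^ k * (q:ℤ) ^ i := by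
        rw [hww]; push_cast; ring
      rw [hmod]; exact hc
    · rcases hcov₁ n with ⟨j, hj1, hjq, hc⟩ | ⟨j, hjq, hc⟩
      · refine ⟨(j, 0, 0), (memS _).mpr (Or.inl ⟨hj1, hjq, rfl, rfl⟩),
          fun h => hPSh (h.mp rfl), ?_⟩
        have hmod : ((ww (j,0,0) : ℕ) : ℤ) = (2:ℤ) ^ j := by
          rw [hww]; push_cast; ring
        rw [hmod]; exact hc
      · refine ⟨(j, 0, 1), (memS _).mpr (Or.inr (Or.inl ⟨hjq, rfl, rfl⟩)),
          fun h => hPSh (h.mp rfl), ?_⟩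
        have hmod : ((ww (j,0,1) : ℕ) : ℤ) = (2:ℤ) ^ j * q := by
          rw [hww]; push_cast; ring
        rw [hmod]; exact hc
  refine ⟨T₃, ?_⟩
  intro t ht0 htT hsize
  set kk : ℤ := (t : ℤ) * b ^ t + α with hkk
  have htM₃ : (t:ℤ) ≡ T₃ [ZMOD (M₃ : ℤ)] := htT.of_dvd (by exact_mod_cast hM₃M)
  have htM₂ : (t:ℤ) ≡ T₂ [ZMOD (M₂ : ℤ)] :=
    (htT.of_dvd (by exact_mod_cast hM₂M)).trans hT₃T₂
  have htM₁ : (t:ℤ) ≡ T₁ [ZMOD (M₁ : ℤ)] :=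
    (htM₂.of_dvd (by exact_mod_cast hM₁M₂)).trans hT₂T₁
  have htM₀ : (t:ℤ) ≡ -α [ZMOD (M₀ : ℤ)] :=
    (htM₁.of_dvd (by exact_mod_cast hM₀M₁)).trans hT₁α
  have hbm1 : (t:ℤ) ≡ -α [ZMOD (b - 1)] := by
    rw [← hβ]
    exact htM₀.of_dvd (by exact_mod_cast hβM₀)
  have DX : ∀ x ∈ S, (pp x : ℤ) ∣ kk * b ^ ρ x + ε x := by
    intro x hx
    by_cases h3 : pp x = 3
    · exact hT₁D t htM₁ x hx h3
    by_cases hqq : pp x = q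
    · exact hT₂D t htM₂ x hx hqq
    · exact hGenD x (Finset.mem_filter.mpr ⟨hx, h3, hqq⟩) t htM₃
  have DVD : ∀ x ∈ S, ∀ n : ℕ, (n:ℤ) ≡ rr x [ZMOD ((ww x : ℕ) : ℤ)] →
      (pp x : ℤ) ∣ kk * b ^ n + ε x := by
    intro x hx n hcong
    have hwZ : ((ww x : ℕ) : ℤ) ≠ 0 := by exact_mod_cast (hwpos x hx).ne'
    have hρcast : ((ρ x : ℕ) : ℤ) = rr x % ((ww x : ℕ) : ℤ) :=
      Int.toNat_of_nonneg (Int.emod_nonneg _ hwZ)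
    have hmm : rr x % ((ww x : ℕ) : ℤ) ≡ rr x [ZMOD ((ww x : ℕ) : ℤ)] :=
      Int.emod_emod_of_dvd _ dvd_rfl
    have hnρ : n ≡ ρ x [MOD ww x] := by
      apply nat_modEq_of_int
      refine hcong.trans ?_
      rw [hρcast]
      exact hmm.symm
    have hBn : (b : ZMod (pp x)) ^ n = (b : ZMod (pp x)) ^ ρ x :=
      pow_eq_of_modEq _ (ww x) (hOrd x hx).2.1 hnρ
    have hDX := DX x hx
    rw [← ZMod.intCast_zmod_eq_zero_iff_dvd] at hDX ⊢
    push_cast at hDX ⊢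
    rw [hBn]
    exact hDX
  have hPmaxZ : (7:ℤ) ≤ (Pmax : ℕ) := by exact_mod_cast hPmax7
  have hkpos : 0 < kk := by
    by_contra hk
    push_neg at hk
    have : kk * b ≤ 0 := mul_nonpos_iff.mpr (Or.inr ⟨hk, by linarith⟩)
    linarith
  have hdvd_k : (b - 1) ∣ kk := by
    have h1 : (b - 1) ∣ (t:ℤ) + α := by
      have h0 := Int.ModEq.dvd hbm1
      have h2 : (t:ℤ) + α = -(-α - (t:ℤ)) := by ring
      rw [h2]
      exact dvd_neg.mpr h0
    have h2 : (b - 1) ∣ b ^ t - 1 := by simpa using sub_dvd_pow_sub_pow b 1 t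
    have h3 : kk = (t:ℤ) * (b ^ t - 1) + ((t:ℤ) + α) := by rw [hkk]; ring
    rw [h3]
    exact dvd_add (Dvd.dvd.mul_left h2 _) h1
  have hgcdP : Int.gcd (kk + 1) (b - 1) = 1 := by
    have hd1 : (↑(Int.gcd (kk + 1) (b - 1)) : ℤ) ∣ kk + 1 := Int.gcd_dvd_left _ _
    have hd2 : (↑(Int.gcd (kk + 1) (b - 1)) : ℤ) ∣ b - 1 := Int.gcd_dvd_right _ _
    have hd3 : (↑(Int.gcd (kk + 1) (b - 1)) : ℤ) ∣ 1 := by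
      have h5 := hd2.trans hdvd_k
      have h6 := dvd_sub hd1 h5
      simpa using h6
    have hd4 : Int.gcd (kk + 1) (b - 1) ∣ 1 := by exact_mod_cast hd3
    exact Nat.dvd_one.mp hd4
  have hgcdR : Int.gcd (kk - 1) (b - 1) = 1 := by
    have hd1 : (↑(Int.gcd (kk - 1) (b - 1)) : ℤ) ∣ kk - 1 := Int.gcd_dvd_left _ _
    have hd2 : (↑(Int.gcd (kk - 1) (b - 1)) : ℤ) ∣ b - 1 := Int.gcd_dvd_right _ _
    have hd3 : (↑(Int.gcd (kk - 1) (b - 1)) : ℤ) ∣ 1 := by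
      have h5 := hd2.trans hdvd_k
      have h6 := dvd_sub h5 hd1
      simpa using h6
    have hd4 : Int.gcd (kk - 1) (b - 1) ∣ 1 := by exact_mod_cast hd3
    exact Nat.dvd_one.mp hd4
  have compMain : ∀ x ∈ S, ∀ n : ℕ, 0 < n → ((n:ℤ) ≡ rr x [ZMOD ((ww x : ℕ) : ℤ)]) →
      IsComposite (kk * b ^ n + ε x) := by
    intro x hx n hn hcong
    have hdvdv : (pp x : ℤ) ∣ kk * b ^ n + ε x := DVD x hx n hcong
    have hb1 : (1:ℤ) ≤ b := by linarith
    have hbn : (b:ℤ) ≤ b ^ n := by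
      calc (b:ℤ) = b ^ 1 := (pow_one b).symm
      _ ≤ b ^ n := pow_le_pow_right₀ hb1 hn
    have hkbn : kk * b ≤ kk * b ^ n := mul_le_mul_of_nonneg_left hbn (le_of_lt hkpos)
    have hppZ : (0:ℤ) < (pp x : ℕ) := by exact_mod_cast (hPx x hx).pos
    have hppPm : ((pp x : ℕ) : ℤ) ≤ ((Pmax : ℕ) : ℤ) := by exact_mod_cast hle_Pmax x hx
    constructor
    · rcases hεcases x with h | h <;> rw [h] <;> linarith
    · intro hPrime
      have hPInt : Prime ((pp x : ℕ) : ℤ) := Nat.prime_iff_prime_int.mp (hPx x hx)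
      have hassoc : Associated ((pp x : ℕ) : ℤ) (kk * b ^ n + ε x) :=
        hPInt.associated_of_dvd hPrime hdvdv
      have hveq : kk * b ^ n + ε x = ((pp x : ℕ) : ℤ) := by
        rcases Int.associated_iff.mp hassoc with h | h
        · exact h.symm
        · exfalso
          rcases hεcases x with h1 | h1 <;> rw [h1] at h <;> linarith
      have hn1 : n = 1 := by
        by_contra hne
        have h2n : 2 ≤ n := by omega
        have hbn2 : (b:ℤ)^2 ≤ b ^ n := pow_le_pow_right₀ hb1 h2n
        have hkbn2 : kk * b^2 ≤ kk * b ^ n := mul_le_mul_of_nonneg_left hbn2 (le_of_lt hkpos)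
        have hkb0 : (0:ℤ) ≤ kk * b := le_of_lt (mul_pos hkpos (by linarith))
        have h33 : 3 * (kk * b) ≤ (kk * b) * b := by
          calc 3 * (kk * b) = (kk * b) * 3 := by ring
          _ ≤ (kk * b) * b := mul_le_mul_of_nonneg_left hb hkb0
        have hb2e : (kk * b) * b = kk * b^2 := by ring
        rcases hεcases x with h1 | h1 <;> rw [h1] at hveq <;> linarith
      subst hn1
      rw [pow_one] at hveq
      rcases hεcases x with h1 | h1
      · -- ε x = 1 : kk * b = pp - 1, so pp = Pmax and b ∣ Pmax - 1
        rw [h1] at hveq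
        have h2 : (Pmax:ℤ) ≤ ((pp x : ℕ) : ℤ) := by linarith
        have hppmax : pp x = Pmax := by
          have h2' : Pmax ≤ pp x := by exact_mod_cast h2
          have := hle_Pmax x hx
          omega
        have hxeq : x = xmax := hdist (Finset.mem_coe.mpr hx) (Finset.mem_coe.mpr hxmaxS)
          (by rw [hppmax, hPmaxeq])
        have hcond := hε1' x h1
        have hcast : ((pp x : ℕ) : ℤ) = ((Pmax : ℕ) : ℤ) := by exact_mod_cast hppmax
        have hDh : D := ⟨kk, by rw [← hcast, ← hveq]; ring⟩
        rw [hxeq] at hcond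
        rw [hPS] at hcond
        exact absurd hDh (by tauto)
      · -- ε x = -1 : kk * b = pp + 1
        rw [h1] at hveq
        have hcond := hεm1' x h1
        have hppodd : Odd ((pp x : ℕ) : ℤ) := Odd.natCast ((hPx x hx).odd_of_ne_two (hPodd x hx))
        have hPmaxoddZ : Odd ((Pmax : ℕ) : ℤ) := Odd.natCast hPmaxOdd
        have hne1 : ((pp x : ℕ) : ℤ) ≠ (Pmax:ℤ) - 1 := by
          intro hcontr
          have heven : Even ((Pmax:ℤ) - ((pp x : ℕ) : ℤ)) := hPmaxoddZ.sub_odd hppodd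
          rw [hcontr, show ((Pmax:ℤ)) - ((Pmax:ℤ) - 1) = 1 from by ring] at heven
          norm_num at heven
        have hrange : ((pp x : ℕ) : ℤ) = (Pmax:ℤ) ∨ ((pp x : ℕ) : ℤ) = (Pmax:ℤ) - 2 := by
          have hlow : (Pmax:ℤ) - 2 ≤ ((pp x : ℕ) : ℤ) := by linarith
          omega
        rcases hrange with hcase | hcase
        · have hppmax : pp x = Pmax := by exact_mod_cast hcase
          have hxeq : x = xmax := hdist (Finset.mem_coe.mpr hx) (Finset.mem_coe.mpr hxmaxS)
            (by rw [hppmax, hPmaxeq])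
          rw [hxeq] at hcond
          have hDh : D := by
            rw [hPS] at hcond
            tauto
          obtain ⟨s, hs⟩ := hDh
          have h2 : (2:ℤ) = b * (kk - s) := by
            have : kk * b - 1 = (Pmax:ℤ) := by rw [← hcase]; linarith
            linear_combination -this - hs
          have hble : b ≤ 2 := Int.le_of_dvd (by norm_num) ⟨kk - s, h2⟩
          linarith
        · have hkb : kk * b = (Pmax:ℤ) - 1 := by rw [hcase] at hveq; linarith
          obtain ⟨y, hyS, hycond, hyc⟩ := coverPlus 1
          have hydvd : (pp y : ℤ) ∣ kk * b ^ (1:ℕ) + ε y := by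
            apply DVD y hyS 1
            simpa using hyc
          rw [hε1 y hycond, pow_one, hkb] at hydvd
          have hydvd' : (pp y : ℤ) ∣ ((Pmax : ℕ) : ℤ) := by
            have he : (Pmax:ℤ) - 1 + 1 = ((Pmax : ℕ) : ℤ) := by ring
            rwa [he] at hydvd
          have hyPm : pp y ∣ Pmax := Int.natCast_dvd_natCast.mp hydvd'
          have hyeq : pp y = Pmax := (Nat.prime_dvd_prime_iff_eq (hPx y hyS) hPmaxPrime).mp hyPm
          have hyx : y = xmax := hdist (Finset.mem_coe.mpr hyS) (Finset.mem_coe.mpr hxmaxS)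
            (by rw [hyeq, hPmaxeq])
          rw [hyx] at hycond
          have hnD : ¬ D := by
            rw [hPS] at hycond
            tauto
          exact hnD ⟨kk, by rw [mul_comm] at hkb; exact hkb.symm⟩
  refine ⟨⟨hkpos, hgcdP, ?_⟩, ⟨hkpos, hgcdR, ?_⟩⟩
  · intro n hn
    obtain ⟨x, hxS, hxc, hc⟩ := coverPlus (n:ℤ)
    have hcm := compMain x hxS n hn hc
    rwa [hε1 x hxc] at hcm
  · intro n hn
    obtain ⟨x, hxS, hxc, hc⟩ := coverMinus (n:ℤ)
    have hcm := compMain x hxS n hn hc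
    rw [hεm1 x hxc] at hcm
    simpa [sub_eq_add_neg] using hcm
end

section
/- Let M = 3868562622766813359059760. For every positive integer t with t ≡ 2245377406103792702454767 (mod M), the Cullen number t·2^t + 1 is a Sierpiński number; that is, (t·2^t + 1)·2^n + 1 is composite for all positive integers n. -/
/-- A Sierpiński number: an odd positive integer `k` such that `k * 2 ^ n + 1` is
composite for all positive integers `n`. -/
def IsSierpinski (k : ℤ) : Prop :=
  0 < k ∧ Odd k ∧ ∀ n : ℕ, 0 < n → IsComposite (k * 2 ^ n + 1)

private lemma pow_congr_of_mod (p o : ℕ) (h2 : (2 : ZMod p) ^ o = 1) {a b : ℕ}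
    (hab : a % o = b % o) : (2 : ZMod p) ^ a = (2 : ZMod p) ^ b := by
  have h : ∀ m : ℕ, (2 : ZMod p) ^ m = (2 : ZMod p) ^ (m % o) := by
    intro m
    conv_lhs => rw [← Nat.div_add_mod m o]
    rw [pow_add, pow_mul, h2, one_pow, one_mul]
  rw [h a, h b, hab]

private lemma dvd_helper (p o e a c t n : ℕ)
    (h2 : (2 : ZMod p) ^ o = 1)
    (htp : t % p = c)
    (hto : t % o = e % o)
    (hn : n % o = a % o)
    (hval : ((c : ZMod p) * 2 ^ e + 1) * 2 ^ a + 1 = 0) :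
    (p : ℤ) ∣ ((t : ℤ) * 2 ^ t + 1) * 2 ^ n + 1 := by
  rw [← ZMod.intCast_zmod_eq_zero_iff_dvd]
  push_cast
  have ht : (t : ZMod p) = c := by rw [← ZMod.natCast_mod t p, htp]
  rw [ht, pow_congr_of_mod p o h2 hto, pow_congr_of_mod p o h2 hn]
  exact hval

private lemma composite_of_dvd (p m : ℤ) (hp : 1 < p) (hd : p ∣ m) (hlt : p < m) :
    IsComposite m := by
  refine ⟨by linarith, ?_⟩
  intro hm
  rcases hd with ⟨c, rfl⟩
  rcases hm.irreducible.isUnit_or_isUnit rfl with hu | hu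
  · exact absurd (Int.isUnit_iff.mp hu) (by omega)
  · rcases Int.isUnit_iff.mp hu with rfl | rfl
    · simp at hlt
    · nlinarith

set_option maxRecDepth 100000 in
theorem cullen_sierpinski :
    ∀ t : ℕ, 0 < t →
      (t : ℤ) ≡ 2245377406103792702454767 [ZMOD 3868562622766813359059760] →
      IsSierpinski ((t : ℤ) * 2 ^ t + 1) := by
  intro t ht h
  have htM : (t : ℤ) % 3868562622766813359059760
      = 2245377406103792702454767 % 3868562622766813359059760 := h
  have htmod : t % 3868562622766813359059760 = 2245377406103792702454767 := by omega
  have htr : (2245377406103792702454767 : ℤ) ≤ (t : ℤ) := by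
    have := Nat.mod_le t 3868562622766813359059760
    omega
  have h2t : (2 : ℤ) ≤ 2 ^ t := by
    calc (2:ℤ) = 2 ^ 1 := (pow_one 2).symm
    _ ≤ 2 ^ t := pow_le_pow_right₀ (by norm_num) ht
  have hklarge : (4278255362 : ℤ) ≤ (t : ℤ) * 2 ^ t + 1 := by nlinarith
  refine ⟨by positivity, ?_, ?_⟩
  · refine ⟨(t : ℤ) * 2 ^ (t - 1), ?_⟩
    have : (2 : ℤ) ^ t = 2 ^ (t - 1) * 2 := by
      rw [← pow_succ]; congr 1; omega
    rw [this]; ring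
  · intro n hn
    have h2n : (1 : ℤ) ≤ 2 ^ n := by
      have := Nat.one_le_two_pow (n := n); push_cast at this ⊢; exact_mod_cast this
    have hmlarge : (4278255362 : ℤ) ≤ ((t : ℤ) * 2 ^ t + 1) * 2 ^ n + 1 := by nlinarith
    have key : ∀ m : ℕ, m < 80 → (m % 2 = 0 ∨ m % 4 = 1 ∨ m % 10 = 1 ∨ m % 5 = 0 ∨
        m % 8 = 3 ∨ m % 20 = 7 ∨ m % 16 = 7 ∨ m % 40 = 23 ∨ m = 79) := by decide
    have cover : n % 2 = 0 ∨ n % 4 = 1 ∨ n % 10 = 1 ∨ n % 5 = 0 ∨ n % 8 = 3 ∨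
        n % 20 = 7 ∨ n % 16 = 7 ∨ n % 40 = 23 ∨ n % 80 = 79 := by
      have e2 : n % 2 = n % 80 % 2 := (Nat.mod_mod_of_dvd n (by norm_num)).symm
      have e4 : n % 4 = n % 80 % 4 := (Nat.mod_mod_of_dvd n (by norm_num)).symm
      have e10 : n % 10 = n % 80 % 10 := (Nat.mod_mod_of_dvd n (by norm_num)).symm
      have e5 : n % 5 = n % 80 % 5 := (Nat.mod_mod_of_dvd n (by norm_num)).symm
      have e8 : n % 8 = n % 80 % 8 := (Nat.mod_mod_of_dvd n (by norm_num)).symm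
      have e20 : n % 20 = n % 80 % 20 := (Nat.mod_mod_of_dvd n (by norm_num)).symm
      have e16 : n % 16 = n % 80 % 16 := (Nat.mod_mod_of_dvd n (by norm_num)).symm
      have e40 : n % 40 = n % 80 % 40 := (Nat.mod_mod_of_dvd n (by norm_num)).symm
      rw [e2, e4, e10, e5, e8, e20, e16, e40]
      exact key _ (Nat.mod_lt _ (by norm_num))
    rcases cover with hc | hc | hc | hc | hc | hc | hc | hc | hc
    · exact composite_of_dvd 3 _ (by norm_num)
        (dvd_helper 3 2 1 0 2 t n (by decide) (by omega) (by omega) (by omega) (by decide))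
        (by linarith)
    · exact composite_of_dvd 5 _ (by norm_num)
        (dvd_helper 5 4 3 1 2 t n (by decide) (by omega) (by omega) (by omega) (by decide))
        (by linarith)
    · exact composite_of_dvd 11 _ (by norm_num)
        (dvd_helper 11 10 7 1 10 t n (by decide) (by omega) (by omega) (by omega) (by decide))
        (by linarith)
    · exact composite_of_dvd 31 _ (by norm_num)
        (dvd_helper 31 5 2 0 15 t n (by decide) (by omega) (by omega) (by omega) (by decide))
        (by linarith)
    · exact composite_of_dvd 17 _ (by norm_num)
        (dvd_helper 17 8 7 3 2 t n (by decide) (by omega) (by omega) (by omega) (by decide))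
        (by linarith)
    · exact composite_of_dvd 41 _ (by norm_num)
        (dvd_helper 41 20 7 7 26 t n (by decide) (by omega) (by omega) (by omega) (by decide))
        (by linarith)
    · exact composite_of_dvd 257 _ (by norm_num)
        (dvd_helper 257 16 15 7 2 t n (by decide) (by omega) (by omega) (by omega) (by decide))
        (by linarith)
    · exact composite_of_dvd 61681 _ (by norm_num)
        (dvd_helper 61681 40 7 23 7168 t n (by decide) (by omega) (by omega) (by omega) (by decide))
        (by linarith)
    · exact composite_of_dvd 4278255361 _ (by norm_num)
        (dvd_helper 4278255361 80 47 79 4177983751 t n (by decide) (by omega) (by omega)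
          (by omega) (by decide))
        (by linarith)
end

section
/- Let M = 3868562622766813359059760. For every positive integer t with t ≡ 1951609044082776021493089 (mod M), the Woodall number t·2^t − 1 is a Sierpiński number; that is, (t·2^t − 1)·2^n + 1 is composite for all positive integers n. -/
set_option maxHeartbeats 1000000
set_option maxRecDepth 100000


lemma key_dvd (p t n a c : ℕ) (hp : t % p = a) (ht : t % 80 = 49) (hn : n % 80 = c)
    (h1 : (2 : ZMod p) ^ 80 = 1)
    (h2 : ((a : ℕ) : ZMod p) * 2 ^ 49 * 2 ^ c - 2 ^ c + 1 = 0) :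
    (p : ℤ) ∣ ((t : ℤ) * 2 ^ t - 1) * 2 ^ n + 1 := by
  have : ((((t : ℤ) * 2 ^ t - 1) * 2 ^ n + 1 : ℤ) : ZMod p) = 0 := by
    push_cast
    have e1 : ((t : ℕ) : ZMod p) = ((a : ℕ) : ZMod p) := by
      rw [← hp, ZMod.natCast_mod]
    have e2 : (2 : ZMod p) ^ t = 2 ^ 49 := by
      conv_lhs => rw [← Nat.mod_add_div t 80, pow_add, pow_mul, h1, one_pow, mul_one, ht]
    have e3 : (2 : ZMod p) ^ n = 2 ^ c := by
      conv_lhs => rw [← Nat.mod_add_div n 80, pow_add, pow_mul, h1, one_pow, mul_one, hn]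
    rw [e1, e2, e3]
    linear_combination h2
  exact (ZMod.intCast_zmod_eq_zero_iff_dvd _ p).mp this

lemma mod80_cases (v : ℕ) (h : v < 80) : v = 0 ∨ v = 1 ∨ v = 2 ∨ v = 3 ∨ v = 4 ∨ v = 5 ∨ v = 6 ∨ v = 7 ∨ v = 8 ∨ v = 9 ∨ v = 10 ∨ v = 11 ∨ v = 12 ∨ v = 13 ∨ v = 14 ∨ v = 15 ∨ v = 16 ∨ v = 17 ∨ v = 18 ∨ v = 19 ∨ v = 20 ∨ v = 21 ∨ v = 22 ∨ v = 23 ∨ v = 24 ∨ v = 25 ∨ v = 26 ∨ v = 27 ∨ v = 28 ∨ v = 29 ∨ v = 30 ∨ v = 31 ∨ v = 32 ∨ v = 33 ∨ v = 34 ∨ v = 35 ∨ v = 36 ∨ v = 37 ∨ v = 38 ∨ v = 39 ∨ v = 40 ∨ v = 41 ∨ v = 42 ∨ v = 43 ∨ v = 44 ∨ v = 45 ∨ v = 46 ∨ v = 47 ∨ v = 48 ∨ v = 49 ∨ v = 50 ∨ v = 51 ∨ v = 52 ∨ v = 53 ∨ v = 54 ∨ v = 55 ∨ v = 56 ∨ v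 = 57 ∨ v = 58 ∨ v = 59 ∨ v = 60 ∨ v = 61 ∨ v = 62 ∨ v = 63 ∨ v = 64 ∨ v = 65 ∨ v = 66 ∨ v = 67 ∨ v = 68 ∨ v = 69 ∨ v = 70 ∨ v = 71 ∨ v = 72 ∨ v = 73 ∨ v = 74 ∨ v = 75 ∨ v = 76 ∨ v = 77 ∨ v = 78 ∨ v = 79 := by omega

lemma comp_of (m : ℤ) (p : ℕ) (hp1 : 1 < (p : ℤ)) (hpm : (p : ℤ) < m)
    (hd : (p : ℤ) ∣ m) : IsComposite m := by
  refine ⟨by linarith, fun hm => ?_⟩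
  obtain ⟨c, hc⟩ := hd
  rcases hm.irreducible.isUnit_or_isUnit hc with h | h
  · rw [Int.isUnit_iff] at h
    rcases h with h | h <;> omega
  · rw [Int.isUnit_iff] at h
    rcases h with h | h <;> subst h <;> omega

theorem woodall_sierpinski :
    ∀ t : ℕ, 0 < t →
      (t : ℤ) ≡ 1951609044082776021493089 [ZMOD 3868562622766813359059760] →
      IsSierpinski ((t : ℤ) * 2 ^ t - 1) := by
  intro t ht hmod
  have kmod : ∀ d c : ℕ, 0 < d → (d : ℤ) ∣ 3868562622766813359059760 →
      1951609044082776021493089 % d = c → t % d = c := by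
    intro d c hd hdvd hc
    have h2 : (t : ℤ) % (d : ℤ) = 1951609044082776021493089 % (d : ℤ) :=
      hmod.of_dvd hdvd
    have h3 : ((t % d : ℕ) : ℤ) = ((1951609044082776021493089 % d : ℕ) : ℤ) := by
      rw [Int.natCast_mod, Int.natCast_mod]
      exact_mod_cast h2
    have h4 : t % d = 1951609044082776021493089 % d := Nat.cast_injective h3
    exact h4.trans hc
  have hm3 : t % 3 = 0 := kmod 3 0 (by norm_num) (by norm_num) (by norm_num)
  have hm5 : t % 5 = 4 := kmod 5 4 (by norm_num) (by norm_num) (by norm_num)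
  have hm11 : t % 11 = 1 := kmod 11 1 (by norm_num) (by norm_num) (by norm_num)
  have hm17 : t % 17 = 10 := kmod 17 10 (by norm_num) (by norm_num) (by norm_num)
  have hm31 : t % 31 = 0 := kmod 31 0 (by norm_num) (by norm_num) (by norm_num)
  have hm41 : t % 41 = 23 := kmod 41 23 (by norm_num) (by norm_num) (by norm_num)
  have hm257 : t % 257 = 130 := kmod 257 130 (by norm_num) (by norm_num) (by norm_num)
  have hm61681 : t % 61681 = 59377 := kmod 61681 59377 (by norm_num) (by norm_num) (by norm_num)
  have hm4278255361 : t % 4278255361 = 2130771713 := kmod 4278255361 2130771713 (by norm_num) (by norm_num) (by norm_num)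
  have hm80 : t % 80 = 49 := kmod 80 49 (by norm_num) (by norm_num) (by norm_num)
  have htR : 1951609044082776021493089 ≤ t := by
    have h1 : t % 3868562622766813359059760 = 1951609044082776021493089 :=
      kmod 3868562622766813359059760 1951609044082776021493089 (by norm_num) (by norm_num)
        (by norm_num)
    have h2 := Nat.mod_le t 3868562622766813359059760
    exact le_of_eq_of_le h1.symm h2
  have ht33 : (33 : ℕ) ≤ t := le_trans (by norm_num) htR
  have hpow : (2 : ℤ) ^ 33 ≤ 2 ^ t := pow_le_pow_right₀ (by norm_num) ht33
  have htZ : (33 : ℤ) ≤ (t : ℤ) := by exact_mod_cast ht33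
  have hkbig : (4278255361 : ℤ) < (t : ℤ) * 2 ^ t - 1 := by
    have : (33 : ℤ) * 2 ^ 33 ≤ (t : ℤ) * 2 ^ t :=
      mul_le_mul htZ hpow (by positivity) (by linarith)
    linarith [this]
  refine ⟨by linarith, ?_, ?_⟩
  · have he : Even ((2 : ℤ) ^ t) :=
      Int.even_pow.mpr ⟨even_two, Nat.pos_iff_ne_zero.mp ht⟩
    exact (he.mul_left _).sub_odd odd_one
  intro n hn
  have hdvd : ∃ p : ℕ, 1 < p ∧ p ≤ 4278255361 ∧
      (p : ℤ) ∣ ((t : ℤ) * 2 ^ t - 1) * 2 ^ n + 1 := by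
    have hlt : n % 80 < 80 := Nat.mod_lt n (by norm_num)
    have hc := mod80_cases (n % 80) hlt
    rcases hc with h0|h1|h2|h3|h4|h5|h6|h7|h8|h9|h10|h11|h12|h13|h14|h15|h16|h17|h18|h19|h20|h21|h22|h23|h24|h25|h26|h27|h28|h29|h30|h31|h32|h33|h34|h35|h36|h37|h38|h39|h40|h41|h42|h43|h44|h45|h46|h47|h48|h49|h50|h51|h52|h53|h54|h55|h56|h57|h58|h59|h60|h61|h62|h63|h64|h65|h66|h67|h68|h69|h70|h71|h72|h73|h74|h75|h76|h77|h78|h79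
    · exact ⟨3, by norm_num, by norm_num, key_dvd 3 t n 0 0 hm3 hm80 h0 (by decide) (by decide)⟩
    · exact ⟨5, by norm_num, by norm_num, key_dvd 5 t n 4 1 hm5 hm80 h1 (by decide) (by decide)⟩
    · exact ⟨3, by norm_num, by norm_num, key_dvd 3 t n 0 2 hm3 hm80 h2 (by decide) (by decide)⟩
    · exact ⟨17, by norm_num, by norm_num, key_dvd 17 t n 10 3 hm17 hm80 h3 (by decide) (by decide)⟩
    · exact ⟨3, by norm_num, by norm_num, key_dvd 3 t n 0 4 hm3 hm80 h4 (by decide) (by decide)⟩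
    · exact ⟨5, by norm_num, by norm_num, key_dvd 5 t n 4 5 hm5 hm80 h5 (by decide) (by decide)⟩
    · exact ⟨3, by norm_num, by norm_num, key_dvd 3 t n 0 6 hm3 hm80 h6 (by decide) (by decide)⟩
    · exact ⟨41, by norm_num, by norm_num, key_dvd 41 t n 23 7 hm41 hm80 h7 (by decide) (by decide)⟩
    · exact ⟨3, by norm_num, by norm_num, key_dvd 3 t n 0 8 hm3 hm80 h8 (by decide) (by decide)⟩
    · exact ⟨5, by norm_num, by norm_num, key_dvd 5 t n 4 9 hm5 hm80 h9 (by decide) (by decide)⟩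
    · exact ⟨3, by norm_num, by norm_num, key_dvd 3 t n 0 10 hm3 hm80 h10 (by decide) (by decide)⟩
    · exact ⟨11, by norm_num, by norm_num, key_dvd 11 t n 1 11 hm11 hm80 h11 (by decide) (by decide)⟩
    · exact ⟨3, by norm_num, by norm_num, key_dvd 3 t n 0 12 hm3 hm80 h12 (by decide) (by decide)⟩
    · exact ⟨5, by norm_num, by norm_num, key_dvd 5 t n 4 13 hm5 hm80 h13 (by decide) (by decide)⟩
    · exact ⟨3, by norm_num, by norm_num, key_dvd 3 t n 0 14 hm3 hm80 h14 (by decide) (by decide)⟩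
    · exact ⟨31, by norm_num, by norm_num, key_dvd 31 t n 0 15 hm31 hm80 h15 (by decide) (by decide)⟩
    · exact ⟨3, by norm_num, by norm_num, key_dvd 3 t n 0 16 hm3 hm80 h16 (by decide) (by decide)⟩
    · exact ⟨5, by norm_num, by norm_num, key_dvd 5 t n 4 17 hm5 hm80 h17 (by decide) (by decide)⟩
    · exact ⟨3, by norm_num, by norm_num, key_dvd 3 t n 0 18 hm3 hm80 h18 (by decide) (by decide)⟩
    · exact ⟨17, by norm_num, by norm_num, key_dvd 17 t n 10 19 hm17 hm80 h19 (by decide) (by decide)⟩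
    · exact ⟨3, by norm_num, by norm_num, key_dvd 3 t n 0 20 hm3 hm80 h20 (by decide) (by decide)⟩
    · exact ⟨5, by norm_num, by norm_num, key_dvd 5 t n 4 21 hm5 hm80 h21 (by decide) (by decide)⟩
    · exact ⟨3, by norm_num, by norm_num, key_dvd 3 t n 0 22 hm3 hm80 h22 (by decide) (by decide)⟩
    · exact ⟨257, by norm_num, by norm_num, key_dvd 257 t n 130 23 hm257 hm80 h23 (by decide) (by decide)⟩
    · exact ⟨3, by norm_num, by norm_num, key_dvd 3 t n 0 24 hm3 hm80 h24 (by decide) (by decide)⟩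
    · exact ⟨5, by norm_num, by norm_num, key_dvd 5 t n 4 25 hm5 hm80 h25 (by decide) (by decide)⟩
    · exact ⟨3, by norm_num, by norm_num, key_dvd 3 t n 0 26 hm3 hm80 h26 (by decide) (by decide)⟩
    · exact ⟨17, by norm_num, by norm_num, key_dvd 17 t n 10 27 hm17 hm80 h27 (by decide) (by decide)⟩
    · exact ⟨3, by norm_num, by norm_num, key_dvd 3 t n 0 28 hm3 hm80 h28 (by decide) (by decide)⟩
    · exact ⟨5, by norm_num, by norm_num, key_dvd 5 t n 4 29 hm5 hm80 h29 (by decide) (by decide)⟩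
    · exact ⟨3, by norm_num, by norm_num, key_dvd 3 t n 0 30 hm3 hm80 h30 (by decide) (by decide)⟩
    · exact ⟨11, by norm_num, by norm_num, key_dvd 11 t n 1 31 hm11 hm80 h31 (by decide) (by decide)⟩
    · exact ⟨3, by norm_num, by norm_num, key_dvd 3 t n 0 32 hm3 hm80 h32 (by decide) (by decide)⟩
    · exact ⟨5, by norm_num, by norm_num, key_dvd 5 t n 4 33 hm5 hm80 h33 (by decide) (by decide)⟩
    · exact ⟨3, by norm_num, by norm_num, key_dvd 3 t n 0 34 hm3 hm80 h34 (by decide) (by decide)⟩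
    · exact ⟨17, by norm_num, by norm_num, key_dvd 17 t n 10 35 hm17 hm80 h35 (by decide) (by decide)⟩
    · exact ⟨3, by norm_num, by norm_num, key_dvd 3 t n 0 36 hm3 hm80 h36 (by decide) (by decide)⟩
    · exact ⟨5, by norm_num, by norm_num, key_dvd 5 t n 4 37 hm5 hm80 h37 (by decide) (by decide)⟩
    · exact ⟨3, by norm_num, by norm_num, key_dvd 3 t n 0 38 hm3 hm80 h38 (by decide) (by decide)⟩
    · exact ⟨257, by norm_num, by norm_num, key_dvd 257 t n 130 39 hm257 hm80 h39 (by decide) (by decide)⟩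
    · exact ⟨3, by norm_num, by norm_num, key_dvd 3 t n 0 40 hm3 hm80 h40 (by decide) (by decide)⟩
    · exact ⟨5, by norm_num, by norm_num, key_dvd 5 t n 4 41 hm5 hm80 h41 (by decide) (by decide)⟩
    · exact ⟨3, by norm_num, by norm_num, key_dvd 3 t n 0 42 hm3 hm80 h42 (by decide) (by decide)⟩
    · exact ⟨17, by norm_num, by norm_num, key_dvd 17 t n 10 43 hm17 hm80 h43 (by decide) (by decide)⟩
    · exact ⟨3, by norm_num, by norm_num, key_dvd 3 t n 0 44 hm3 hm80 h44 (by decide) (by decide)⟩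
    · exact ⟨5, by norm_num, by norm_num, key_dvd 5 t n 4 45 hm5 hm80 h45 (by decide) (by decide)⟩
    · exact ⟨3, by norm_num, by norm_num, key_dvd 3 t n 0 46 hm3 hm80 h46 (by decide) (by decide)⟩
    · exact ⟨41, by norm_num, by norm_num, key_dvd 41 t n 23 47 hm41 hm80 h47 (by decide) (by decide)⟩
    · exact ⟨3, by norm_num, by norm_num, key_dvd 3 t n 0 48 hm3 hm80 h48 (by decide) (by decide)⟩
    · exact ⟨5, by norm_num, by norm_num, key_dvd 5 t n 4 49 hm5 hm80 h49 (by decide) (by decide)⟩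
    · exact ⟨3, by norm_num, by norm_num, key_dvd 3 t n 0 50 hm3 hm80 h50 (by decide) (by decide)⟩
    · exact ⟨11, by norm_num, by norm_num, key_dvd 11 t n 1 51 hm11 hm80 h51 (by decide) (by decide)⟩
    · exact ⟨3, by norm_num, by norm_num, key_dvd 3 t n 0 52 hm3 hm80 h52 (by decide) (by decide)⟩
    · exact ⟨5, by norm_num, by norm_num, key_dvd 5 t n 4 53 hm5 hm80 h53 (by decide) (by decide)⟩
    · exact ⟨3, by norm_num, by norm_num, key_dvd 3 t n 0 54 hm3 hm80 h54 (by decide) (by decide)⟩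
    · exact ⟨31, by norm_num, by norm_num, key_dvd 31 t n 0 55 hm31 hm80 h55 (by decide) (by decide)⟩
    · exact ⟨3, by norm_num, by norm_num, key_dvd 3 t n 0 56 hm3 hm80 h56 (by decide) (by decide)⟩
    · exact ⟨5, by norm_num, by norm_num, key_dvd 5 t n 4 57 hm5 hm80 h57 (by decide) (by decide)⟩
    · exact ⟨3, by norm_num, by norm_num, key_dvd 3 t n 0 58 hm3 hm80 h58 (by decide) (by decide)⟩
    · exact ⟨17, by norm_num, by norm_num, key_dvd 17 t n 10 59 hm17 hm80 h59 (by decide) (by decide)⟩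
    · exact ⟨3, by norm_num, by norm_num, key_dvd 3 t n 0 60 hm3 hm80 h60 (by decide) (by decide)⟩
    · exact ⟨5, by norm_num, by norm_num, key_dvd 5 t n 4 61 hm5 hm80 h61 (by decide) (by decide)⟩
    · exact ⟨3, by norm_num, by norm_num, key_dvd 3 t n 0 62 hm3 hm80 h62 (by decide) (by decide)⟩
    · exact ⟨61681, by norm_num, by norm_num, key_dvd 61681 t n 59377 63 hm61681 hm80 h63 (by decide) (by decide)⟩
    · exact ⟨3, by norm_num, by norm_num, key_dvd 3 t n 0 64 hm3 hm80 h64 (by decide) (by decide)⟩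
    · exact ⟨5, by norm_num, by norm_num, key_dvd 5 t n 4 65 hm5 hm80 h65 (by decide) (by decide)⟩
    · exact ⟨3, by norm_num, by norm_num, key_dvd 3 t n 0 66 hm3 hm80 h66 (by decide) (by decide)⟩
    · exact ⟨17, by norm_num, by norm_num, key_dvd 17 t n 10 67 hm17 hm80 h67 (by decide) (by decide)⟩
    · exact ⟨3, by norm_num, by norm_num, key_dvd 3 t n 0 68 hm3 hm80 h68 (by decide) (by decide)⟩
    · exact ⟨5, by norm_num, by norm_num, key_dvd 5 t n 4 69 hm5 hm80 h69 (by decide) (by decide)⟩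
    · exact ⟨3, by norm_num, by norm_num, key_dvd 3 t n 0 70 hm3 hm80 h70 (by decide) (by decide)⟩
    · exact ⟨11, by norm_num, by norm_num, key_dvd 11 t n 1 71 hm11 hm80 h71 (by decide) (by decide)⟩
    · exact ⟨3, by norm_num, by norm_num, key_dvd 3 t n 0 72 hm3 hm80 h72 (by decide) (by decide)⟩
    · exact ⟨5, by norm_num, by norm_num, key_dvd 5 t n 4 73 hm5 hm80 h73 (by decide) (by decide)⟩
    · exact ⟨3, by norm_num, by norm_num, key_dvd 3 t n 0 74 hm3 hm80 h74 (by decide) (by decide)⟩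
    · exact ⟨17, by norm_num, by norm_num, key_dvd 17 t n 10 75 hm17 hm80 h75 (by decide) (by decide)⟩
    · exact ⟨3, by norm_num, by norm_num, key_dvd 3 t n 0 76 hm3 hm80 h76 (by decide) (by decide)⟩
    · exact ⟨5, by norm_num, by norm_num, key_dvd 5 t n 4 77 hm5 hm80 h77 (by decide) (by decide)⟩
    · exact ⟨3, by norm_num, by norm_num, key_dvd 3 t n 0 78 hm3 hm80 h78 (by decide) (by decide)⟩
    · exact ⟨4278255361, by norm_num, by norm_num, key_dvd 4278255361 t n 2130771713 79 hm4278255361 hm80 h79 (by decide) (by decide)⟩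
  obtain ⟨p, hp1, hp2, hpd⟩ := hdvd
  have h2n : (1 : ℤ) ≤ 2 ^ n := one_le_pow₀ (by norm_num)
  have hkm : ((t : ℤ) * 2 ^ t - 1) ≤ ((t : ℤ) * 2 ^ t - 1) * 2 ^ n := by
    nlinarith
  refine comp_of _ p (by exact_mod_cast hp1) ?_ hpd
  have : (p : ℤ) ≤ 4278255361 := by exact_mod_cast hp2
  linarith
end

section
/- Let M = 3868562622766813359059760. For every positive integer t with t ≡ 3334297893475587915471523 (mod M), the Woodall number t·2^t − 1 is a Riesel number; that is, (t·2^t − 1)·2^n − 1 is composite for all positive integers n. -/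
/-- A Riesel number: an odd positive integer `k` such that `k * 2 ^ n - 1` is
composite for all positive integers `n`. -/
def IsRiesel (k : ℤ) : Prop :=
  0 < k ∧ Odd k ∧ ∀ n : ℕ, 0 < n → IsComposite (k * 2 ^ n - 1)

lemma wr_pow_mod (p : ℤ) (h : (2:ℤ)^80 ≡ 1 [ZMOD p]) (m : ℕ) :
    (2:ℤ)^m ≡ 2^(m % 80) [ZMOD p] := by
  conv_lhs => rw [← Nat.div_add_mod m 80]
  rw [pow_add, pow_mul]
  calc ((2:ℤ)^80)^(m/80) * 2^(m%80) ≡ 1^(m/80) * 2^(m%80) [ZMOD p] :=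
        Int.ModEq.mul (h.pow _) Int.ModEq.rfl
  _ = 2^(m%80) := by ring

lemma wr_comp_of (p m : ℤ) (h1 : 1 < p) (hd : p ∣ m) (hlt : p < m) : IsComposite m := by
  refine ⟨by linarith, fun hm => ?_⟩
  obtain ⟨c, hc⟩ := hd
  rcases hm.irreducible.isUnit_or_isUnit hc with h | h
  · rcases Int.isUnit_iff.mp h with h' | h' <;> omega
  · rcases Int.isUnit_iff.mp h with h' | h' <;> subst h' <;> nlinarith

lemma wr_case (p : ℤ) (h1 : 1 < p) (hple : p ≤ 4278255361)
    (hd80 : p ∣ 2^80 - 1) (t n : ℕ)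
    (ht : p ∣ 3334297893475587915471523 - (t:ℤ)) (ht80 : t % 80 = 3)
    (a : ℕ) (hn : n % 80 = a)
    (h0 : p ∣ (3334297893475587915471523 * 2^3 - 1) * 2^a - 1)
    (hbig : (4278255361:ℤ) < ((t:ℤ)*2^t-1)*2^n-1) :
    IsComposite (((t:ℤ) * 2 ^ t - 1) * 2 ^ n - 1) := by
  have h80 : (2:ℤ)^80 ≡ 1 [ZMOD p] := (Int.modEq_iff_dvd.mpr hd80).symm
  have htc : (t:ℤ) ≡ 3334297893475587915471523 [ZMOD p] := Int.modEq_iff_dvd.mpr ht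
  have e1 := wr_pow_mod p h80 t; rw [ht80] at e1
  have e2 := wr_pow_mod p h80 n; rw [hn] at e2
  have h5 : ((t:ℤ)*2^t - 1)*2^n - 1 ≡
      (3334297893475587915471523 * 2^3 - 1) * 2^a - 1 [ZMOD p] :=
    (((htc.mul e1).sub Int.ModEq.rfl).mul e2).sub Int.ModEq.rfl
  have hdvd : p ∣ ((t:ℤ)*2^t - 1)*2^n - 1 :=
    (Int.modEq_zero_iff_dvd).mp (h5.trans ((Int.modEq_zero_iff_dvd).mpr h0))
  exact wr_comp_of p _ h1 hdvd (lt_of_le_of_lt hple hbig)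

lemma wr_big (t n : ℕ) (ht : 4278255362 ≤ (t:ℤ)) (hn : 0 < n) :
    (4278255361:ℤ) < ((t:ℤ) * 2 ^ t - 1) * 2 ^ n - 1 := by
  have h1t : 1 ≤ t := by omega
  have h2t : (2:ℤ) ≤ 2 ^ t := by
    calc (2:ℤ) = 2^1 := by ring
    _ ≤ 2^t := pow_le_pow_right₀ (by norm_num) h1t
  have h2n : (2:ℤ) ≤ 2 ^ n := by
    calc (2:ℤ) = 2^1 := by ring
    _ ≤ 2^n := pow_le_pow_right₀ (by norm_num) hn
  nlinarith [mul_le_mul_of_nonneg_left h2t (by linarith : (0:ℤ) ≤ (t:ℤ)),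
    mul_le_mul_of_nonneg_right (by nlinarith : (8556510723:ℤ) ≤ (t:ℤ)*2^t - 1) (by linarith : (0:ℤ) ≤ (2:ℤ)^n)]

theorem woodall_riesel :
    ∀ t : ℕ, 0 < t →
      (t : ℤ) ≡ 3334297893475587915471523 [ZMOD 3868562622766813359059760] →
      IsRiesel ((t : ℤ) * 2 ^ t - 1) := by
  intro t ht hcong
  have hM : (3868562622766813359059760:ℤ) ∣ 3334297893475587915471523 - (t:ℤ) := hcong.dvd
  have htr : 3334297893475587915471523 ≤ (t:ℤ) := by omega
  have ht80 : t % 80 = 3 := by omega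
  have hd1 : (3:ℤ) ∣ 3334297893475587915471523 - (t:ℤ) :=
    dvd_trans (by norm_num) hM
  have h80d1 : (3:ℤ) ∣ 2^80 - 1 := by norm_num
  have hd2 : (5:ℤ) ∣ 3334297893475587915471523 - (t:ℤ) :=
    dvd_trans (by norm_num) hM
  have h80d2 : (5:ℤ) ∣ 2^80 - 1 := by norm_num
  have hd3 : (11:ℤ) ∣ 3334297893475587915471523 - (t:ℤ) :=
    dvd_trans (by norm_num) hM
  have h80d3 : (11:ℤ) ∣ 2^80 - 1 := by norm_num
  have hd4 : (17:ℤ) ∣ 3334297893475587915471523 - (t:ℤ) :=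
    dvd_trans (by norm_num) hM
  have h80d4 : (17:ℤ) ∣ 2^80 - 1 := by norm_num
  have hd5 : (31:ℤ) ∣ 3334297893475587915471523 - (t:ℤ) :=
    dvd_trans (by norm_num) hM
  have h80d5 : (31:ℤ) ∣ 2^80 - 1 := by norm_num
  have hd6 : (41:ℤ) ∣ 3334297893475587915471523 - (t:ℤ) :=
    dvd_trans (by norm_num) hM
  have h80d6 : (41:ℤ) ∣ 2^80 - 1 := by norm_num
  have hd7 : (257:ℤ) ∣ 3334297893475587915471523 - (t:ℤ) :=
    dvd_trans (by norm_num) hM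
  have h80d7 : (257:ℤ) ∣ 2^80 - 1 := by norm_num
  have hd8 : (61681:ℤ) ∣ 3334297893475587915471523 - (t:ℤ) :=
    dvd_trans (by norm_num) hM
  have h80d8 : (61681:ℤ) ∣ 2^80 - 1 := by norm_num
  have hd9 : (4278255361:ℤ) ∣ 3334297893475587915471523 - (t:ℤ) :=
    dvd_trans (by norm_num) hM
  have h80d9 : (4278255361:ℤ) ∣ 2^80 - 1 := by norm_num
  have h2t : (2:ℤ) ≤ 2 ^ t := by
    calc (2:ℤ) = 2^1 := by ring
    _ ≤ 2^t := pow_le_pow_right₀ (by norm_num) ht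
  refine ⟨by nlinarith, ?_, fun n hn => ?_⟩
  · have hev : Even ((t:ℤ) * 2 ^ t) := by
      refine Even.mul_left ?_ _
      exact (Int.even_pow' (by omega)).mpr even_two
    exact hev.sub_odd odd_one
  have hb := wr_big t n (by linarith) hn
  obtain ⟨a, halt, ha⟩ : ∃ a, a < 80 ∧ n % 80 = a :=
    ⟨n % 80, Nat.mod_lt _ (by norm_num), rfl⟩
  interval_cases a
  · exact wr_case 3 (by norm_num) (by norm_num) h80d1 t n hd1 ht80 0 ha (by norm_num) hb
  · exact wr_case 5 (by norm_num) (by norm_num) h80d2 t n hd2 ht80 1 ha (by norm_num) hb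
  · exact wr_case 3 (by norm_num) (by norm_num) h80d1 t n hd1 ht80 2 ha (by norm_num) hb
  · exact wr_case 17 (by norm_num) (by norm_num) h80d4 t n hd4 ht80 3 ha (by norm_num) hb
  · exact wr_case 3 (by norm_num) (by norm_num) h80d1 t n hd1 ht80 4 ha (by norm_num) hb
  · exact wr_case 5 (by norm_num) (by norm_num) h80d2 t n hd2 ht80 5 ha (by norm_num) hb
  · exact wr_case 3 (by norm_num) (by norm_num) h80d1 t n hd1 ht80 6 ha (by norm_num) hb
  · exact wr_case 41 (by norm_num) (by norm_num) h80d6 t n hd6 ht80 7 ha (by norm_num) hb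
  · exact wr_case 3 (by norm_num) (by norm_num) h80d1 t n hd1 ht80 8 ha (by norm_num) hb
  · exact wr_case 5 (by norm_num) (by norm_num) h80d2 t n hd2 ht80 9 ha (by norm_num) hb
  · exact wr_case 3 (by norm_num) (by norm_num) h80d1 t n hd1 ht80 10 ha (by norm_num) hb
  · exact wr_case 11 (by norm_num) (by norm_num) h80d3 t n hd3 ht80 11 ha (by norm_num) hb
  · exact wr_case 3 (by norm_num) (by norm_num) h80d1 t n hd1 ht80 12 ha (by norm_num) hb
  · exact wr_case 5 (by norm_num) (by norm_num) h80d2 t n hd2 ht80 13 ha (by norm_num) hb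
  · exact wr_case 3 (by norm_num) (by norm_num) h80d1 t n hd1 ht80 14 ha (by norm_num) hb
  · exact wr_case 31 (by norm_num) (by norm_num) h80d5 t n hd5 ht80 15 ha (by norm_num) hb
  · exact wr_case 3 (by norm_num) (by norm_num) h80d1 t n hd1 ht80 16 ha (by norm_num) hb
  · exact wr_case 5 (by norm_num) (by norm_num) h80d2 t n hd2 ht80 17 ha (by norm_num) hb
  · exact wr_case 3 (by norm_num) (by norm_num) h80d1 t n hd1 ht80 18 ha (by norm_num) hb
  · exact wr_case 17 (by norm_num) (by norm_num) h80d4 t n hd4 ht80 19 ha (by norm_num) hb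
  · exact wr_case 3 (by norm_num) (by norm_num) h80d1 t n hd1 ht80 20 ha (by norm_num) hb
  · exact wr_case 5 (by norm_num) (by norm_num) h80d2 t n hd2 ht80 21 ha (by norm_num) hb
  · exact wr_case 3 (by norm_num) (by norm_num) h80d1 t n hd1 ht80 22 ha (by norm_num) hb
  · exact wr_case 257 (by norm_num) (by norm_num) h80d7 t n hd7 ht80 23 ha (by norm_num) hb
  · exact wr_case 3 (by norm_num) (by norm_num) h80d1 t n hd1 ht80 24 ha (by norm_num) hb
  · exact wr_case 5 (by norm_num) (by norm_num) h80d2 t n hd2 ht80 25 ha (by norm_num) hb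
  · exact wr_case 3 (by norm_num) (by norm_num) h80d1 t n hd1 ht80 26 ha (by norm_num) hb
  · exact wr_case 17 (by norm_num) (by norm_num) h80d4 t n hd4 ht80 27 ha (by norm_num) hb
  · exact wr_case 3 (by norm_num) (by norm_num) h80d1 t n hd1 ht80 28 ha (by norm_num) hb
  · exact wr_case 5 (by norm_num) (by norm_num) h80d2 t n hd2 ht80 29 ha (by norm_num) hb
  · exact wr_case 3 (by norm_num) (by norm_num) h80d1 t n hd1 ht80 30 ha (by norm_num) hb
  · exact wr_case 11 (by norm_num) (by norm_num) h80d3 t n hd3 ht80 31 ha (by norm_num) hb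
  · exact wr_case 3 (by norm_num) (by norm_num) h80d1 t n hd1 ht80 32 ha (by norm_num) hb
  · exact wr_case 5 (by norm_num) (by norm_num) h80d2 t n hd2 ht80 33 ha (by norm_num) hb
  · exact wr_case 3 (by norm_num) (by norm_num) h80d1 t n hd1 ht80 34 ha (by norm_num) hb
  · exact wr_case 17 (by norm_num) (by norm_num) h80d4 t n hd4 ht80 35 ha (by norm_num) hb
  · exact wr_case 3 (by norm_num) (by norm_num) h80d1 t n hd1 ht80 36 ha (by norm_num) hb
  · exact wr_case 5 (by norm_num) (by norm_num) h80d2 t n hd2 ht80 37 ha (by norm_num) hb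
  · exact wr_case 3 (by norm_num) (by norm_num) h80d1 t n hd1 ht80 38 ha (by norm_num) hb
  · exact wr_case 257 (by norm_num) (by norm_num) h80d7 t n hd7 ht80 39 ha (by norm_num) hb
  · exact wr_case 3 (by norm_num) (by norm_num) h80d1 t n hd1 ht80 40 ha (by norm_num) hb
  · exact wr_case 5 (by norm_num) (by norm_num) h80d2 t n hd2 ht80 41 ha (by norm_num) hb
  · exact wr_case 3 (by norm_num) (by norm_num) h80d1 t n hd1 ht80 42 ha (by norm_num) hb
  · exact wr_case 17 (by norm_num) (by norm_num) h80d4 t n hd4 ht80 43 ha (by norm_num) hb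
  · exact wr_case 3 (by norm_num) (by norm_num) h80d1 t n hd1 ht80 44 ha (by norm_num) hb
  · exact wr_case 5 (by norm_num) (by norm_num) h80d2 t n hd2 ht80 45 ha (by norm_num) hb
  · exact wr_case 3 (by norm_num) (by norm_num) h80d1 t n hd1 ht80 46 ha (by norm_num) hb
  · exact wr_case 41 (by norm_num) (by norm_num) h80d6 t n hd6 ht80 47 ha (by norm_num) hb
  · exact wr_case 3 (by norm_num) (by norm_num) h80d1 t n hd1 ht80 48 ha (by norm_num) hb
  · exact wr_case 5 (by norm_num) (by norm_num) h80d2 t n hd2 ht80 49 ha (by norm_num) hb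
  · exact wr_case 3 (by norm_num) (by norm_num) h80d1 t n hd1 ht80 50 ha (by norm_num) hb
  · exact wr_case 11 (by norm_num) (by norm_num) h80d3 t n hd3 ht80 51 ha (by norm_num) hb
  · exact wr_case 3 (by norm_num) (by norm_num) h80d1 t n hd1 ht80 52 ha (by norm_num) hb
  · exact wr_case 5 (by norm_num) (by norm_num) h80d2 t n hd2 ht80 53 ha (by norm_num) hb
  · exact wr_case 3 (by norm_num) (by norm_num) h80d1 t n hd1 ht80 54 ha (by norm_num) hb
  · exact wr_case 31 (by norm_num) (by norm_num) h80d5 t n hd5 ht80 55 ha (by norm_num) hb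
  · exact wr_case 3 (by norm_num) (by norm_num) h80d1 t n hd1 ht80 56 ha (by norm_num) hb
  · exact wr_case 5 (by norm_num) (by norm_num) h80d2 t n hd2 ht80 57 ha (by norm_num) hb
  · exact wr_case 3 (by norm_num) (by norm_num) h80d1 t n hd1 ht80 58 ha (by norm_num) hb
  · exact wr_case 17 (by norm_num) (by norm_num) h80d4 t n hd4 ht80 59 ha (by norm_num) hb
  · exact wr_case 3 (by norm_num) (by norm_num) h80d1 t n hd1 ht80 60 ha (by norm_num) hb
  · exact wr_case 5 (by norm_num) (by norm_num) h80d2 t n hd2 ht80 61 ha (by norm_num) hb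
  · exact wr_case 3 (by norm_num) (by norm_num) h80d1 t n hd1 ht80 62 ha (by norm_num) hb
  · exact wr_case 61681 (by norm_num) (by norm_num) h80d8 t n hd8 ht80 63 ha (by norm_num) hb
  · exact wr_case 3 (by norm_num) (by norm_num) h80d1 t n hd1 ht80 64 ha (by norm_num) hb
  · exact wr_case 5 (by norm_num) (by norm_num) h80d2 t n hd2 ht80 65 ha (by norm_num) hb
  · exact wr_case 3 (by norm_num) (by norm_num) h80d1 t n hd1 ht80 66 ha (by norm_num) hb
  · exact wr_case 17 (by norm_num) (by norm_num) h80d4 t n hd4 ht80 67 ha (by norm_num) hb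
  · exact wr_case 3 (by norm_num) (by norm_num) h80d1 t n hd1 ht80 68 ha (by norm_num) hb
  · exact wr_case 5 (by norm_num) (by norm_num) h80d2 t n hd2 ht80 69 ha (by norm_num) hb
  · exact wr_case 3 (by norm_num) (by norm_num) h80d1 t n hd1 ht80 70 ha (by norm_num) hb
  · exact wr_case 11 (by norm_num) (by norm_num) h80d3 t n hd3 ht80 71 ha (by norm_num) hb
  · exact wr_case 3 (by norm_num) (by norm_num) h80d1 t n hd1 ht80 72 ha (by norm_num) hb
  · exact wr_case 5 (by norm_num) (by norm_num) h80d2 t n hd2 ht80 73 ha (by norm_num) hb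
  · exact wr_case 3 (by norm_num) (by norm_num) h80d1 t n hd1 ht80 74 ha (by norm_num) hb
  · exact wr_case 17 (by norm_num) (by norm_num) h80d4 t n hd4 ht80 75 ha (by norm_num) hb
  · exact wr_case 3 (by norm_num) (by norm_num) h80d1 t n hd1 ht80 76 ha (by norm_num) hb
  · exact wr_case 5 (by norm_num) (by norm_num) h80d2 t n hd2 ht80 77 ha (by norm_num) hb
  · exact wr_case 3 (by norm_num) (by norm_num) h80d1 t n hd1 ht80 78 ha (by norm_num) hb
  · exact wr_case 4278255361 (by norm_num) (by norm_num) h80d9 t n hd9 ht80 79 ha (by norm_num) hb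
end

section
/- For any integer b ≥ 2 and any integers α and β with α·β ≠ 0, there exist infinitely many positive integers t such that gcd((t·b^t + α) + β, b − 1) = 1 and (t·b^t + α)·b^n + β is composite for all positive integers n. -/
namespace SRaux

lemma comp_of_dvd {m v : ℤ} (h1 : 1 < m) (h2 : m < v) (hd : m ∣ v) : IsComposite v := by
  refine ⟨lt_trans h1 h2, ?_⟩
  intro hp
  obtain ⟨k, hk⟩ := hd
  rcases hp.irreducible.isUnit_or_isUnit hk with h | h
  · rw [Int.isUnit_iff] at h; omega
  · rw [Int.isUnit_iff] at h
    rcases h with h | h <;> rw [h] at hk <;> omega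

lemma gcd_eq_one_of_dvd_sub_one {x c : ℤ} (h : c ∣ x - 1) : Int.gcd x c = 1 := by
  have h1 : (Int.gcd x c : ℤ) ∣ x := Int.gcd_dvd_left x c
  have h2 : (Int.gcd x c : ℤ) ∣ x - 1 := dvd_trans (Int.gcd_dvd_right x c) h
  have h3 : (Int.gcd x c : ℤ) ∣ 1 := by
    have := dvd_sub h1 h2; simpa using this
  exact_mod_cast Int.eq_one_of_dvd_one (by positivity) h3

lemma sub_one_dvd_pow {b : ℤ} {m M : ℕ} (h : m ∣ M) : b ^ m - 1 ∣ b ^ M - 1 := by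
  obtain ⟨k, rfl⟩ := h
  rw [pow_mul]
  simpa using sub_dvd_pow_sub_pow (b ^ m) 1 k

lemma dvd_pow_sub_pow_of_modeq {b N : ℤ} {d t τ : ℕ} (hN : N ∣ b ^ d - 1)
    (ht : t ≡ τ [MOD d]) : N ∣ b ^ t - b ^ τ := by
  have key : ∀ u v : ℕ, u ≤ v → u ≡ v [MOD d] → N ∣ b ^ v - b ^ u := by
    intro u v huv hmod
    obtain ⟨k, hk⟩ := (Nat.modEq_iff_dvd' huv).mp hmod
    have hv : v = u + d * k := by omega
    subst hv
    have h1 : b ^ d - 1 ∣ (b ^ d) ^ k - 1 := by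
      simpa using sub_dvd_pow_sub_pow (b ^ d) 1 k
    have h2 : N ∣ (b ^ d) ^ k - 1 := hN.trans h1
    have : b ^ (u + d * k) - b ^ u = b ^ u * ((b ^ d) ^ k - 1) := by
      rw [pow_add, pow_mul]; ring
    rw [this]
    exact h2.mul_left _
  rcases le_total τ t with h | h
  · exact key τ t h ht.symm
  · have := key t τ h ht
    have h2 : b ^ t - b ^ τ = -(b ^ τ - b ^ t) := by ring
    rw [h2]
    exact this.neg_right

lemma infinite_of_unbounded {S : Set ℕ} (h : ∀ N : ℕ, ∃ t ∈ S, N ≤ t) : S.Infinite := by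
  intro hfin
  obtain ⟨x, hx⟩ := hfin.bddAbove
  obtain ⟨t, ht, hNt⟩ := h (x + 1)
  have := hx ht
  omega

lemma crt_list : ∀ (l : List (ℕ × ℕ)),
    (l.map Prod.fst).Pairwise Nat.Coprime →
    ∃ r : ℕ, ∀ q ∈ l, r ≡ q.2 [MOD q.1] := by
  intro l
  induction l with
  | nil => exact fun _ => ⟨0, by simp⟩
  | cons hd tl ih =>
    intro hco
    rw [List.map_cons, List.pairwise_cons] at hco
    obtain ⟨r', hr'⟩ := ih hco.2
    have hcop : Nat.Coprime hd.1 (tl.map Prod.fst).prod :=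
      Nat.coprime_list_prod_right_iff.mpr (fun x hx => hco.1 x hx)
    obtain ⟨k, hk1, hk2⟩ := Nat.chineseRemainder hcop hd.2 r'
    refine ⟨k, ?_⟩
    intro q hq
    rcases List.mem_cons.mp hq with rfl | hq'
    · exact hk1
    · have hdvd : q.1 ∣ (tl.map Prod.fst).prod :=
        List.dvd_prod (List.mem_map_of_mem (f := Prod.fst) hq')
      exact (Nat.ModEq.of_dvd hdvd hk2).trans (hr' q hq')

lemma pow23 (N : ℕ) : 0 < N → (∀ p, Nat.Prime p → p ∣ N → p = 2 ∨ p = 3) →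
    ∃ i j : ℕ, N = 2 ^ i * 3 ^ j := by
  induction N using Nat.strong_induction_on with
  | _ N ih =>
    intro hpos hp
    rcases eq_or_lt_of_le (show 1 ≤ N from hpos) with h1 | h1
    · exact ⟨0, 0, by omega⟩
    · have hne : N ≠ 1 := by omega
      have hpf := Nat.minFac_prime hne
      have hdvd := Nat.minFac_dvd N
      obtain ⟨M, hM⟩ := hdvd
      have h2 := hpf.two_le
      have hMpos : 0 < M := by
        rcases Nat.eq_zero_or_pos M with h | h
        · rw [h, Nat.mul_zero] at hM; omega
        · exact h
      have hMlt : M < N := by nlinarith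
      have hMdvd : M ∣ N := ⟨N.minFac, hM.trans (Nat.mul_comm _ _)⟩
      obtain ⟨i, j, hij⟩ := ih M hMlt hMpos
        (fun p pp pd => hp p pp (pd.trans hMdvd))
      rcases hp _ hpf (Nat.minFac_dvd N) with h | h
      · exact ⟨i + 1, j, by rw [hM, hij, h]; ring⟩
      · exact ⟨i, j + 1, by rw [hM, hij, h]; ring⟩

lemma exists_big_prime {N : ℕ} (h4 : ¬ 4 ∣ N) (h9 : ¬ 9 ∣ N) (h6 : 6 < N) :
    ∃ p, Nat.Prime p ∧ p ∣ N ∧ 5 ≤ p := by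
  by_contra hc
  push_neg at hc
  have hall : ∀ p, Nat.Prime p → p ∣ N → p = 2 ∨ p = 3 := by
    intro p pp pd
    have h5 := hc p pp pd
    have h2 := pp.two_le
    have h4' : p ≠ 4 := by rintro rfl; exact absurd pp (by decide)
    omega
  obtain ⟨i, j, rfl⟩ := pow23 N (by omega) hall
  have hi : i ≤ 1 := by
    by_contra h
    exact h4 (Dvd.dvd.mul_right (by
      have : (2:ℕ)^2 ∣ 2^i := pow_dvd_pow 2 (by omega)
      simpa using this) _)
  have hj : j ≤ 1 := by
    by_contra h
    exact h9 (Dvd.dvd.mul_left (by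
      have : (3:ℕ)^2 ∣ 3^j := pow_dvd_pow 3 (by omega)
      simpa using this) _)
  interval_cases i <;> interval_cases j <;> simp_all

lemma exists_big_prime' {N : ℕ} (h4 : ¬ 4 ∣ N) (h3 : ¬ 3 ∣ N) (h6 : 2 < N) :
    ∃ p, Nat.Prime p ∧ p ∣ N ∧ 5 ≤ p := by
  by_contra hc
  push_neg at hc
  have hall : ∀ p, Nat.Prime p → p ∣ N → p = 2 ∨ p = 3 := by
    intro p pp pd
    have h5 := hc p pp pd
    have h2 := pp.two_le
    have h4' : p ≠ 4 := by rintro rfl; exact absurd pp (by decide)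
    omega
  obtain ⟨i, j, rfl⟩ := pow23 N (by omega) hall
  have hj : j = 0 := by
    by_contra h
    exact h3 (Dvd.dvd.mul_left (by
      have : (3:ℕ)^1 ∣ 3^j := pow_dvd_pow 3 (by omega)
      simpa using this) _)
  have hi : i ≤ 1 := by
    by_contra h
    exact h4 (Dvd.dvd.mul_right (by
      have : (2:ℕ)^2 ∣ 2^i := pow_dvd_pow 2 (by omega)
      simpa using this) _)
  interval_cases i <;> simp_all

def GoodPrime (b : ℤ) (d p : ℕ) : Prop :=
  Nat.Prime p ∧ 5 ≤ p ∧ (p : ℤ) ∣ b ^ d - 1 ∧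
    ∀ m : ℕ, m ∣ d → m ≠ d → ¬ (p : ℤ) ∣ b ^ m - 1

lemma GoodPrime.orderOf_eq {b : ℤ} {d p : ℕ} (hd : 0 < d) (h : GoodPrime b d p) :
    orderOf (b : ZMod p) = d := by
  obtain ⟨hp, -, hdvd, hmin⟩ := h
  haveI := Fact.mk hp
  have hb1 : (b : ZMod p) ^ d = 1 := by
    have h0 : ((b ^ d - 1 : ℤ) : ZMod p) = 0 :=
      (ZMod.intCast_zmod_eq_zero_iff_dvd _ p).mpr hdvd
    push_cast at h0
    linear_combination h0
  have hord : orderOf (b : ZMod p) ∣ d := orderOf_dvd_of_pow_eq_one hb1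
  by_contra hne
  refine hmin _ hord hne ?_
  rw [← ZMod.intCast_zmod_eq_zero_iff_dvd]
  push_cast
  rw [pow_orderOf_eq_one]
  ring

lemma GoodPrime.ne {b : ℤ} {d d' p p' : ℕ} (hd : 0 < d) (hd' : 0 < d')
    (h : GoodPrime b d p) (h' : GoodPrime b d' p') (hne : d ≠ d') : p ≠ p' := by
  rintro rfl
  rw [← h.orderOf_eq hd, ← h'.orderOf_eq hd'] at hne
  exact hne rfl

lemma exists_prime_div {m d : ℕ} (hd : 0 < d) (hm : m ∣ d) (hne : m ≠ d) :
    ∃ q, Nat.Prime q ∧ q ∣ d ∧ m ∣ d / q := by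
  obtain ⟨k, rfl⟩ := hm
  have hk : k ≠ 1 := by rintro rfl; simp at hne
  have hk0 : k ≠ 0 := by rintro rfl; simp at hd
  have hq := Nat.minFac_prime hk
  refine ⟨k.minFac, hq, Dvd.dvd.mul_left (Nat.minFac_dvd k) m, ?_⟩
  rw [Nat.mul_div_assoc m (Nat.minFac_dvd k)]
  exact dvd_mul_right _ _

lemma goodprime_of_cert {b : ℤ} {d p : ℕ} (hp : Nat.Prime p) (h5 : 5 ≤ p) (hd : 0 < d)
    (hdvd : (p : ℤ) ∣ b ^ d - 1)
    (hq : ∀ q : ℕ, Nat.Prime q → q ∣ d → ¬ (p : ℤ) ∣ b ^ (d / q) - 1) :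
    GoodPrime b d p := by
  refine ⟨hp, h5, hdvd, ?_⟩
  intro m hm hne hpd
  obtain ⟨q, hq1, hq2, hq3⟩ := exists_prime_div hd hm hne
  exact hq q hq1 hq2 (hpd.trans (sub_one_dvd_pow hq3))

lemma q2_refute {b v : ℤ} {p : ℕ} (h5 : 5 ≤ p) {m : ℕ} (hV : (p : ℤ) ∣ v)
    (r : ℤ) (hid : v * r = b ^ m + 1) (h : (p : ℤ) ∣ b ^ m - 1) : False := by
  have h1 : (p : ℤ) ∣ b ^ m + 1 := hid ▸ hV.mul_right r
  have h2 : (p : ℤ) ∣ 2 := by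
    have := dvd_sub h1 h; simpa using this
  have := Int.le_of_dvd (by norm_num) h2
  omega

lemma q3_refute {b v : ℤ} {p : ℕ} (h5 : 5 ≤ p) {m : ℕ} (hV : (p : ℤ) ∣ v)
    (r : ℤ) (hid : v * r = b ^ (2 * m) + b ^ m + 1) (h : (p : ℤ) ∣ b ^ m - 1) : False := by
  have h1 : (p : ℤ) ∣ b ^ (2 * m) + b ^ m + 1 := hid ▸ hV.mul_right r
  have h2 : (p : ℤ) ∣ 3 := by
    have h3 : (p:ℤ) ∣ (b ^ m - 1) * (b ^ m + 2) := h.mul_right _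
    have h4 : (3:ℤ) = (b ^ (2*m) + b ^ m + 1) - (b ^ m - 1) * (b ^ m + 2) := by
      rw [two_mul, pow_add]; ring
    rw [h4]
    exact dvd_sub h1 h3
  have := Int.le_of_dvd (by norm_num) h2
  omega

lemma cres_spec (b α β : ℤ) (p d w τ : ℕ) (hp : Nat.Prime p) (hd : 0 < d)
    (hdvd : (p : ℤ) ∣ b ^ d - 1) :
    ∃ c : ℕ, ∀ t : ℕ, t ≡ c [MOD p] → (p : ℤ) ∣ ((t : ℤ) * b ^ τ + α) + β * b ^ w := by
  haveI := Fact.mk hp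
  have hb0 : (b : ZMod p) ≠ 0 := by
    intro h
    have h1 : ((b ^ d - 1 : ℤ) : ZMod p) = 0 := (ZMod.intCast_zmod_eq_zero_iff_dvd _ p).mpr hdvd
    push_cast at h1
    rw [h, zero_pow hd.ne'] at h1
    simp at h1
  have hbτ : (b : ZMod p) ^ τ ≠ 0 := pow_ne_zero _ hb0
  set x : ZMod p := (-(α : ZMod p) - (β : ZMod p) * (b : ZMod p) ^ w) * ((b : ZMod p) ^ τ)⁻¹
    with hx
  refine ⟨x.val, ?_⟩
  intro t ht
  rw [← ZMod.intCast_zmod_eq_zero_iff_dvd]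
  push_cast
  have ht' : ((t : ℕ) : ZMod p) = x := by
    rw [(ZMod.natCast_eq_natCast_iff _ _ _).mpr ht, ZMod.natCast_val, ZMod.cast_id]
  rw [ht', hx]
  field_simp
  ring

lemma class_dvd {b α β : ℤ} {p d a w τ t n : ℕ} (hdvd : (p : ℤ) ∣ b ^ d - 1)
    (hwa : (w + a) % d = 0) (hn : n % d = a % d) (ht : t ≡ τ [MOD d])
    (hA : (p : ℤ) ∣ ((t : ℤ) * b ^ τ + α) + β * b ^ w) :
    (p : ℤ) ∣ ((t : ℤ) * b ^ t + α) * b ^ n + β := by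
  have h1 : (p : ℤ) ∣ b ^ t - b ^ τ := dvd_pow_sub_pow_of_modeq hdvd ht
  have hwn : (w + n) ≡ 0 [MOD d] := by
    have h2 : (w + n) ≡ (w + a) [MOD d] := Nat.ModEq.add_left w hn
    have h3 : (w + a) ≡ 0 [MOD d] := by
      show (w + a) % d = 0 % d
      simpa using hwa
    exact h2.trans h3
  have h2 : (p : ℤ) ∣ b ^ (w + n) - 1 := by
    simpa using dvd_pow_sub_pow_of_modeq hdvd hwn
  have key : ((t : ℤ) * b ^ t + α) * b ^ n + β
      = b ^ n * (((t : ℤ) * b ^ τ + α) + β * b ^ w)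
        + ((t : ℤ) * b ^ n) * (b ^ t - b ^ τ) - β * (b ^ (w + n) - 1) := by
    rw [pow_add]; ring
  rw [key]
  exact dvd_sub (dvd_add (hA.mul_left _) (h1.mul_left _)) (h2.mul_left _)

lemma skeleton (b α β : ℤ) (hb : 2 ≤ b) (M : ℕ) (hM : 0 < M) (W : ℕ)
    (hMb : (b - 1) ∣ (M : ℤ))
    (hW : (b - 1) ∣ ((W : ℤ) - (1 - α - β)))
    (P : List (ℕ × ℕ)) (hco : (M :: P.map Prod.fst).Pairwise Nat.Coprime)
    (hpos : ∀ q ∈ P, 0 < q.1)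
    (Bd : ℤ)
    (hdiv : ∀ t n : ℕ, 0 < n → t ≡ W [MOD M] → (∀ q ∈ P, t ≡ q.2 [MOD q.1]) →
      ∃ m : ℤ, 1 < m ∧ m ≤ Bd ∧ m ∣ ((t : ℤ) * b ^ t + α) * b ^ n + β) :
    {t : ℕ | 0 < t ∧ Int.gcd ((t : ℤ) * b ^ t + α + β) (b - 1) = 1 ∧
      ∀ n : ℕ, 0 < n → IsComposite (((t : ℤ) * b ^ t + α) * b ^ n + β)}.Infinite := by
  obtain ⟨r, hr⟩ := crt_list ((M, W) :: P) hco
  set L : ℕ := M * (P.map Prod.fst).prod with hL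
  have hLpos : 0 < L := by
    rw [hL]
    apply Nat.mul_pos hM
    apply List.prod_pos
    intro x hx
    rcases List.mem_map.mp hx with ⟨q, hq, rfl⟩
    exact hpos q hq
  apply infinite_of_unbounded
  intro N
  set k : ℕ := N + Bd.toNat + α.natAbs + β.natAbs + 1 with hk
  set t : ℕ := r + k * L with htdef
  have htk : k ≤ t := by
    calc k ≤ k * L := Nat.le_mul_of_pos_right k hLpos
    _ ≤ t := Nat.le_add_left _ _
  refine ⟨t, ?_, by omega⟩
  have hmod : ∀ q ∈ (M, W) :: P, t ≡ q.2 [MOD q.1] := by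
    intro q hq
    refine Nat.ModEq.trans ?_ (hr q hq)
    show t ≡ r [MOD q.1]
    have hdvd : q.1 ∣ k * L := by
      apply Dvd.dvd.mul_left
      rcases List.mem_cons.mp hq with rfl | hq'
      · exact Dvd.intro _ rfl
      · exact Dvd.dvd.mul_left (List.dvd_prod (List.mem_map_of_mem (f := Prod.fst) hq')) M
    exact (Nat.modEq_iff_dvd' (by omega)).mpr (by simpa [htdef] using hdvd) |>.symm
  have hmodM : t ≡ W [MOD M] := hmod (M, W) List.mem_cons_self
  have hmodP : ∀ q ∈ P, t ≡ q.2 [MOD q.1] := fun q hq => hmod q (List.mem_cons_of_mem _ hq)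
  have htb : (b - 1) ∣ ((t : ℤ) - (1 - α - β)) := by
    have h1 : (M : ℤ) ∣ (t : ℤ) - (W : ℤ) :=
      Int.ModEq.dvd (Int.natCast_modEq_iff.mpr hmodM).symm
    have h2 : (b - 1) ∣ (t : ℤ) - (W : ℤ) := hMb.trans h1
    have h3 : (t : ℤ) - (1 - α - β) = ((t : ℤ) - (W : ℤ)) + ((W : ℤ) - (1 - α - β)) := by ring
    rw [h3]
    exact dvd_add h2 hW
  refine ⟨by omega, ?_, ?_⟩
  · -- gcd
    apply gcd_eq_one_of_dvd_sub_one
    have hbt : (b - 1) ∣ b ^ t - 1 := by simpa using sub_dvd_pow_sub_pow b 1 t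
    have key : (t : ℤ) * b ^ t + α + β - 1 = (t : ℤ) * (b ^ t - 1) + ((t : ℤ) - (1 - α - β)) := by
      ring
    rw [key]
    exact dvd_add (hbt.mul_left _) htb
  · intro n hn
    obtain ⟨m, hm1, hm2, hm3⟩ := hdiv t n hn hmodM hmodP
    have hBd : (2 : ℤ) ≤ Bd := by omega
    have hα : -(α.natAbs : ℤ) ≤ α ∧ α ≤ (α.natAbs : ℤ) := by omega
    have hβ : -(β.natAbs : ℤ) ≤ β ∧ β ≤ (β.natAbs : ℤ) := by omega
    have htZ : (Bd + (α.natAbs : ℤ) + (β.natAbs : ℤ) + 1) ≤ (t : ℤ) := by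
      have h1 : Bd.toNat + α.natAbs + β.natAbs + 1 ≤ t := by omega
      have h2 : Bd ≤ (Bd.toNat : ℤ) := Int.self_le_toNat Bd
      have h3 : ((Bd.toNat + α.natAbs + β.natAbs + 1 : ℕ) : ℤ) ≤ (t : ℤ) := by
        exact_mod_cast h1
      push_cast at h3
      omega
    have hbt2 : (2 : ℤ) ≤ b ^ t := by
      calc (2:ℤ) ≤ b := hb
      _ = b ^ 1 := (pow_one b).symm
      _ ≤ b ^ t := pow_le_pow_right₀ (by omega) (by omega)
    have hbn2 : (2 : ℤ) ≤ b ^ n := by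
      calc (2:ℤ) ≤ b := hb
      _ = b ^ 1 := (pow_one b).symm
      _ ≤ b ^ n := pow_le_pow_right₀ (by omega) (by omega)
    have hA : Bd + (β.natAbs : ℤ) + 1 ≤ (t : ℤ) * b ^ t + α := by nlinarith
    have hV : Bd < ((t : ℤ) * b ^ t + α) * b ^ n + β := by nlinarith
    exact comp_of_dvd hm1 (by omega) hm3

lemma zmod_transfer {k : ℕ} {v : ℤ} (hnn : 0 ≤ v) (h : (v : ZMod k) ≠ 0) : ¬ k ∣ v.toNat := by
  intro hdvd
  apply h
  rw [ZMod.intCast_zmod_eq_zero_iff_dvd]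
  have h2 := Int.natCast_dvd_natCast.mpr hdvd
  rwa [Int.toNat_of_nonneg hnn] at h2


lemma good3 {b : ℤ} (hb : 2 ≤ b) : ∃ p : ℕ, GoodPrime b 3 p := by
  set v : ℤ := b ^ 2 + b + 1 with hv
  have hsz : 6 < v := by
    nlinarith
  have hnn : (0:ℤ) ≤ v := by linarith
  have hm4 : ((v : ZMod 4)) ≠ 0 := by
    have hz : ∀ x : ZMod 4, x ^ 2 + x + 1 ≠ 0 := by decide
    rw [hv]; push_cast; apply hz
  have hm9 : ((v : ZMod 9)) ≠ 0 := by
    have hz : ∀ x : ZMod 9, x ^ 2 + x + 1 ≠ 0 := by decide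
    rw [hv]; push_cast; apply hz
  have hNv : ((v.toNat : ℤ)) = v := Int.toNat_of_nonneg hnn
  obtain ⟨p, hp, hpd, h5⟩ := exists_big_prime (N := v.toNat)
    (zmod_transfer hnn hm4) (zmod_transfer hnn hm9) (by omega)
  have hpdZ : (p : ℤ) ∣ v := by rw [← hNv]; exact_mod_cast hpd
  refine ⟨p, goodprime_of_cert hp h5 (by norm_num) ?_ ?_⟩
  · exact hpdZ.trans ⟨b - 1, by rw [hv]; ring⟩
  · intro q hq hqd
    have hq23 : q = 2 ∨ q = 3 := by
      have h2 := hq.two_le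
      have hle := Nat.le_of_dvd (by norm_num) hqd
      interval_cases q <;> first | (left; rfl) | (right; rfl) | (exfalso; revert hq hqd; decide)
    intro hbad
    rcases hq23 with rfl | rfl
    · exfalso; revert hqd; decide
    · have hbad' : (p : ℤ) ∣ b ^ 1 - 1 := by rw [pow_one]; norm_num at hbad; exact hbad
      exact q3_refute h5 hpdZ (1) (by rw [hv]; ring) hbad'

lemma good4 {b : ℤ} (hb : 2 ≤ b) : ∃ p : ℕ, GoodPrime b 4 p := by
  set v : ℤ := b ^ 2 + 1 with hv
  have hsz : 2 < v := by
    nlinarith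
  have hnn : (0:ℤ) ≤ v := by linarith
  have hm4 : ((v : ZMod 4)) ≠ 0 := by
    have hz : ∀ x : ZMod 4, x ^ 2 + 1 ≠ 0 := by decide
    rw [hv]; push_cast; apply hz
  have hm3 : ((v : ZMod 3)) ≠ 0 := by
    have hz : ∀ x : ZMod 3, x ^ 2 + 1 ≠ 0 := by decide
    rw [hv]; push_cast; apply hz
  have hNv : ((v.toNat : ℤ)) = v := Int.toNat_of_nonneg hnn
  obtain ⟨p, hp, hpd, h5⟩ := exists_big_prime' (N := v.toNat)
    (zmod_transfer hnn hm4) (zmod_transfer hnn hm3) (by omega)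
  have hpdZ : (p : ℤ) ∣ v := by rw [← hNv]; exact_mod_cast hpd
  refine ⟨p, goodprime_of_cert hp h5 (by norm_num) ?_ ?_⟩
  · exact hpdZ.trans ⟨b ^ 2 - 1, by rw [hv]; ring⟩
  · intro q hq hqd
    have hq23 : q = 2 ∨ q = 3 := by
      have h2 := hq.two_le
      have hle := Nat.le_of_dvd (by norm_num) hqd
      interval_cases q <;> first | (left; rfl) | (right; rfl) | (exfalso; revert hq hqd; decide)
    intro hbad
    rcases hq23 with rfl | rfl
    · have hbad' : (p : ℤ) ∣ b ^ 2 - 1 := by norm_num at hbad; exact hbad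
      exact q2_refute h5 hpdZ (1) (by rw [hv]; ring) hbad'
    · exfalso; revert hqd; decide

lemma good6 {b : ℤ} (hb : 3 ≤ b) : ∃ p : ℕ, GoodPrime b 6 p := by
  set v : ℤ := b ^ 2 - b + 1 with hv
  have hsz : 6 < v := by
    nlinarith
  have hnn : (0:ℤ) ≤ v := by linarith
  have hm4 : ((v : ZMod 4)) ≠ 0 := by
    have hz : ∀ x : ZMod 4, x ^ 2 - x + 1 ≠ 0 := by decide
    rw [hv]; push_cast; apply hz
  have hm9 : ((v : ZMod 9)) ≠ 0 := by
    have hz : ∀ x : ZMod 9, x ^ 2 - x + 1 ≠ 0 := by decide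
    rw [hv]; push_cast; apply hz
  have hNv : ((v.toNat : ℤ)) = v := Int.toNat_of_nonneg hnn
  obtain ⟨p, hp, hpd, h5⟩ := exists_big_prime (N := v.toNat)
    (zmod_transfer hnn hm4) (zmod_transfer hnn hm9) (by omega)
  have hpdZ : (p : ℤ) ∣ v := by rw [← hNv]; exact_mod_cast hpd
  refine ⟨p, goodprime_of_cert hp h5 (by norm_num) ?_ ?_⟩
  · exact hpdZ.trans ⟨(b + 1) * (b ^ 3 - 1), by rw [hv]; ring⟩
  · intro q hq hqd
    have hq23 : q = 2 ∨ q = 3 := by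
      have h2 := hq.two_le
      have hle := Nat.le_of_dvd (by norm_num) hqd
      interval_cases q <;> first | (left; rfl) | (right; rfl) | (exfalso; revert hq hqd; decide)
    intro hbad
    rcases hq23 with rfl | rfl
    · have hbad' : (p : ℤ) ∣ b ^ 3 - 1 := by norm_num at hbad; exact hbad
      exact q2_refute h5 hpdZ (b + 1) (by rw [hv]; ring) hbad'
    · have hbad' : (p : ℤ) ∣ b ^ 2 - 1 := by norm_num at hbad; exact hbad
      exact q3_refute h5 hpdZ (b ^ 2 + b + 1) (by rw [hv]; ring) hbad'

lemma good8 {b : ℤ} (hb : 2 ≤ b) : ∃ p : ℕ, GoodPrime b 8 p := by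
  set v : ℤ := b ^ 4 + 1 with hv
  have hsz : 6 < v := by
    have hx : (16:ℤ) ≤ b ^ 4 := by
      have := pow_le_pow_left₀ (by norm_num : (0:ℤ) ≤ 2) hb 4
      norm_num at this; exact this
    linarith
  have hnn : (0:ℤ) ≤ v := by linarith
  have hm4 : ((v : ZMod 4)) ≠ 0 := by
    have hz : ∀ x : ZMod 4, x ^ 4 + 1 ≠ 0 := by decide
    rw [hv]; push_cast; apply hz
  have hm9 : ((v : ZMod 9)) ≠ 0 := by
    have hz : ∀ x : ZMod 9, x ^ 4 + 1 ≠ 0 := by decide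
    rw [hv]; push_cast; apply hz
  have hNv : ((v.toNat : ℤ)) = v := Int.toNat_of_nonneg hnn
  obtain ⟨p, hp, hpd, h5⟩ := exists_big_prime (N := v.toNat)
    (zmod_transfer hnn hm4) (zmod_transfer hnn hm9) (by omega)
  have hpdZ : (p : ℤ) ∣ v := by rw [← hNv]; exact_mod_cast hpd
  refine ⟨p, goodprime_of_cert hp h5 (by norm_num) ?_ ?_⟩
  · exact hpdZ.trans ⟨b ^ 4 - 1, by rw [hv]; ring⟩
  · intro q hq hqd
    have hq23 : q = 2 ∨ q = 3 := by
      have h2 := hq.two_le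
      have hle := Nat.le_of_dvd (by norm_num) hqd
      interval_cases q <;> first | (left; rfl) | (right; rfl) | (exfalso; revert hq hqd; decide)
    intro hbad
    rcases hq23 with rfl | rfl
    · have hbad' : (p : ℤ) ∣ b ^ 4 - 1 := by norm_num at hbad; exact hbad
      exact q2_refute h5 hpdZ (1) (by rw [hv]; ring) hbad'
    · exfalso; revert hqd; decide

lemma good9 {b : ℤ} (hb : 2 ≤ b) : ∃ p : ℕ, GoodPrime b 9 p := by
  set v : ℤ := b ^ 6 + b ^ 3 + 1 with hv
  have hsz : 6 < v := by
    have hx : (8:ℤ) ≤ b ^ 3 := by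
      have := pow_le_pow_left₀ (by norm_num : (0:ℤ) ≤ 2) hb 3
      norm_num at this; exact this
    have hy : (0:ℤ) ≤ b ^ 6 := by positivity
    linarith
  have hnn : (0:ℤ) ≤ v := by linarith
  have hm4 : ((v : ZMod 4)) ≠ 0 := by
    have hz : ∀ x : ZMod 4, x ^ 6 + x ^ 3 + 1 ≠ 0 := by decide
    rw [hv]; push_cast; apply hz
  have hm9 : ((v : ZMod 9)) ≠ 0 := by
    have hz : ∀ x : ZMod 9, x ^ 6 + x ^ 3 + 1 ≠ 0 := by decide
    rw [hv]; push_cast; apply hz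
  have hNv : ((v.toNat : ℤ)) = v := Int.toNat_of_nonneg hnn
  obtain ⟨p, hp, hpd, h5⟩ := exists_big_prime (N := v.toNat)
    (zmod_transfer hnn hm4) (zmod_transfer hnn hm9) (by omega)
  have hpdZ : (p : ℤ) ∣ v := by rw [← hNv]; exact_mod_cast hpd
  refine ⟨p, goodprime_of_cert hp h5 (by norm_num) ?_ ?_⟩
  · exact hpdZ.trans ⟨b ^ 3 - 1, by rw [hv]; ring⟩
  · intro q hq hqd
    have hq23 : q = 2 ∨ q = 3 := by
      have h2 := hq.two_le
      have hle := Nat.le_of_dvd (by norm_num) hqd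
      interval_cases q <;> first | (left; rfl) | (right; rfl) | (exfalso; revert hq hqd; decide)
    intro hbad
    rcases hq23 with rfl | rfl
    · exfalso; revert hqd; decide
    · have hbad' : (p : ℤ) ∣ b ^ 3 - 1 := by norm_num at hbad; exact hbad
      exact q3_refute h5 hpdZ (1) (by rw [hv]; ring) hbad'

lemma good12 {b : ℤ} (hb : 2 ≤ b) : ∃ p : ℕ, GoodPrime b 12 p := by
  set v : ℤ := b ^ 4 - b ^ 2 + 1 with hv
  have hsz : 6 < v := by
    have hx : (4:ℤ) ≤ b ^ 2 := by
      have := pow_le_pow_left₀ (by norm_num : (0:ℤ) ≤ 2) hb 2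
      norm_num at this; exact this
    have he : b ^ 4 = (b ^ 2) ^ 2 := by ring
    nlinarith [hx, he, sq_nonneg (b ^ 2 - 4)]
  have hnn : (0:ℤ) ≤ v := by linarith
  have hm4 : ((v : ZMod 4)) ≠ 0 := by
    have hz : ∀ x : ZMod 4, x ^ 4 - x ^ 2 + 1 ≠ 0 := by decide
    rw [hv]; push_cast; apply hz
  have hm9 : ((v : ZMod 9)) ≠ 0 := by
    have hz : ∀ x : ZMod 9, x ^ 4 - x ^ 2 + 1 ≠ 0 := by decide
    rw [hv]; push_cast; apply hz
  have hNv : ((v.toNat : ℤ)) = v := Int.toNat_of_nonneg hnn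
  obtain ⟨p, hp, hpd, h5⟩ := exists_big_prime (N := v.toNat)
    (zmod_transfer hnn hm4) (zmod_transfer hnn hm9) (by omega)
  have hpdZ : (p : ℤ) ∣ v := by rw [← hNv]; exact_mod_cast hpd
  refine ⟨p, goodprime_of_cert hp h5 (by norm_num) ?_ ?_⟩
  · exact hpdZ.trans ⟨(b ^ 2 + 1) * (b ^ 6 - 1), by rw [hv]; ring⟩
  · intro q hq hqd
    have hq23 : q = 2 ∨ q = 3 := by
      have h2 := hq.two_le
      have hle := Nat.le_of_dvd (by norm_num) hqd
      interval_cases q <;> first | (left; rfl) | (right; rfl) | (exfalso; revert hq hqd; decide)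
    intro hbad
    rcases hq23 with rfl | rfl
    · have hbad' : (p : ℤ) ∣ b ^ 6 - 1 := by norm_num at hbad; exact hbad
      exact q2_refute h5 hpdZ (b ^ 2 + 1) (by rw [hv]; ring) hbad'
    · have hbad' : (p : ℤ) ∣ b ^ 4 - 1 := by norm_num at hbad; exact hbad
      exact q3_refute h5 hpdZ (b ^ 4 + b ^ 2 + 1) (by rw [hv]; ring) hbad'

lemma good16 {b : ℤ} (hb : 2 ≤ b) : ∃ p : ℕ, GoodPrime b 16 p := by
  set v : ℤ := b ^ 8 + 1 with hv
  have hsz : 6 < v := by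
    have hx : (0:ℤ) ≤ b ^ 8 := by positivity
    have hx2 : (16:ℤ) ≤ b ^ 4 := by
      have := pow_le_pow_left₀ (by norm_num : (0:ℤ) ≤ 2) hb 4
      norm_num at this; exact this
    have he : b ^ 8 = (b ^ 4) ^ 2 := by ring
    nlinarith [hx2, he]
  have hnn : (0:ℤ) ≤ v := by linarith
  have hm4 : ((v : ZMod 4)) ≠ 0 := by
    have hz : ∀ x : ZMod 4, x ^ 8 + 1 ≠ 0 := by decide
    rw [hv]; push_cast; apply hz
  have hm9 : ((v : ZMod 9)) ≠ 0 := by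
    have hz : ∀ x : ZMod 9, x ^ 8 + 1 ≠ 0 := by decide
    rw [hv]; push_cast; apply hz
  have hNv : ((v.toNat : ℤ)) = v := Int.toNat_of_nonneg hnn
  obtain ⟨p, hp, hpd, h5⟩ := exists_big_prime (N := v.toNat)
    (zmod_transfer hnn hm4) (zmod_transfer hnn hm9) (by omega)
  have hpdZ : (p : ℤ) ∣ v := by rw [← hNv]; exact_mod_cast hpd
  refine ⟨p, goodprime_of_cert hp h5 (by norm_num) ?_ ?_⟩
  · exact hpdZ.trans ⟨b ^ 8 - 1, by rw [hv]; ring⟩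
  · intro q hq hqd
    have hq23 : q = 2 ∨ q = 3 := by
      have h2 := hq.two_le
      have hle := Nat.le_of_dvd (by norm_num) hqd
      interval_cases q <;> first | (left; rfl) | (right; rfl) | (exfalso; revert hq hqd; decide)
    intro hbad
    rcases hq23 with rfl | rfl
    · have hbad' : (p : ℤ) ∣ b ^ 8 - 1 := by norm_num at hbad; exact hbad
      exact q2_refute h5 hpdZ (1) (by rw [hv]; ring) hbad'
    · exfalso; revert hqd; decide

lemma good18 {b : ℤ} (hb : 2 ≤ b) : ∃ p : ℕ, GoodPrime b 18 p := by
  set v : ℤ := b ^ 6 - b ^ 3 + 1 with hv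
  have hsz : 6 < v := by
    have hx : (8:ℤ) ≤ b ^ 3 := by
      have := pow_le_pow_left₀ (by norm_num : (0:ℤ) ≤ 2) hb 3
      norm_num at this; exact this
    have he : b ^ 6 = (b ^ 3) ^ 2 := by ring
    nlinarith [hx, he, sq_nonneg (b ^ 3 - 8)]
  have hnn : (0:ℤ) ≤ v := by linarith
  have hm4 : ((v : ZMod 4)) ≠ 0 := by
    have hz : ∀ x : ZMod 4, x ^ 6 - x ^ 3 + 1 ≠ 0 := by decide
    rw [hv]; push_cast; apply hz
  have hm9 : ((v : ZMod 9)) ≠ 0 := by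
    have hz : ∀ x : ZMod 9, x ^ 6 - x ^ 3 + 1 ≠ 0 := by decide
    rw [hv]; push_cast; apply hz
  have hNv : ((v.toNat : ℤ)) = v := Int.toNat_of_nonneg hnn
  obtain ⟨p, hp, hpd, h5⟩ := exists_big_prime (N := v.toNat)
    (zmod_transfer hnn hm4) (zmod_transfer hnn hm9) (by omega)
  have hpdZ : (p : ℤ) ∣ v := by rw [← hNv]; exact_mod_cast hpd
  refine ⟨p, goodprime_of_cert hp h5 (by norm_num) ?_ ?_⟩
  · exact hpdZ.trans ⟨(b ^ 3 + 1) * (b ^ 9 - 1), by rw [hv]; ring⟩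
  · intro q hq hqd
    have hq23 : q = 2 ∨ q = 3 := by
      have h2 := hq.two_le
      have hle := Nat.le_of_dvd (by norm_num) hqd
      interval_cases q <;> first | (left; rfl) | (right; rfl) | (exfalso; revert hq hqd; decide)
    intro hbad
    rcases hq23 with rfl | rfl
    · have hbad' : (p : ℤ) ∣ b ^ 9 - 1 := by norm_num at hbad; exact hbad
      exact q2_refute h5 hpdZ (b ^ 3 + 1) (by rw [hv]; ring) hbad'
    · have hbad' : (p : ℤ) ∣ b ^ 6 - 1 := by norm_num at hbad; exact hbad
      exact q3_refute h5 hpdZ (b ^ 6 + b ^ 3 + 1) (by rw [hv]; ring) hbad'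

lemma good24 {b : ℤ} (hb : 2 ≤ b) : ∃ p : ℕ, GoodPrime b 24 p := by
  set v : ℤ := b ^ 8 - b ^ 4 + 1 with hv
  have hsz : 6 < v := by
    have hx : (16:ℤ) ≤ b ^ 4 := by
      have := pow_le_pow_left₀ (by norm_num : (0:ℤ) ≤ 2) hb 4
      norm_num at this; exact this
    have he : b ^ 8 = (b ^ 4) ^ 2 := by ring
    nlinarith [hx, he, sq_nonneg (b ^ 4 - 16)]
  have hnn : (0:ℤ) ≤ v := by linarith
  have hm4 : ((v : ZMod 4)) ≠ 0 := by
    have hz : ∀ x : ZMod 4, x ^ 8 - x ^ 4 + 1 ≠ 0 := by decide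
    rw [hv]; push_cast; apply hz
  have hm9 : ((v : ZMod 9)) ≠ 0 := by
    have hz : ∀ x : ZMod 9, x ^ 8 - x ^ 4 + 1 ≠ 0 := by decide
    rw [hv]; push_cast; apply hz
  have hNv : ((v.toNat : ℤ)) = v := Int.toNat_of_nonneg hnn
  obtain ⟨p, hp, hpd, h5⟩ := exists_big_prime (N := v.toNat)
    (zmod_transfer hnn hm4) (zmod_transfer hnn hm9) (by omega)
  have hpdZ : (p : ℤ) ∣ v := by rw [← hNv]; exact_mod_cast hpd
  refine ⟨p, goodprime_of_cert hp h5 (by norm_num) ?_ ?_⟩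
  · exact hpdZ.trans ⟨(b ^ 4 + 1) * (b ^ 12 - 1), by rw [hv]; ring⟩
  · intro q hq hqd
    have hq23 : q = 2 ∨ q = 3 := by
      have h2 := hq.two_le
      have hle := Nat.le_of_dvd (by norm_num) hqd
      interval_cases q <;> first | (left; rfl) | (right; rfl) | (exfalso; revert hq hqd; decide)
    intro hbad
    rcases hq23 with rfl | rfl
    · have hbad' : (p : ℤ) ∣ b ^ 12 - 1 := by norm_num at hbad; exact hbad
      exact q2_refute h5 hpdZ (b ^ 4 + 1) (by rw [hv]; ring) hbad'
    · have hbad' : (p : ℤ) ∣ b ^ 8 - 1 := by norm_num at hbad; exact hbad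
      exact q3_refute h5 hpdZ (b ^ 8 + b ^ 4 + 1) (by rw [hv]; ring) hbad'

lemma good36 {b : ℤ} (hb : 2 ≤ b) : ∃ p : ℕ, GoodPrime b 36 p := by
  set v : ℤ := b ^ 12 - b ^ 6 + 1 with hv
  have hsz : 6 < v := by
    have hx : (8:ℤ) ≤ b ^ 3 := by
      have := pow_le_pow_left₀ (by norm_num : (0:ℤ) ≤ 2) hb 3
      norm_num at this; exact this
    have hx2 : (64:ℤ) ≤ b ^ 6 := by nlinarith [hx, sq_nonneg (b ^ 3 - 8), sq_nonneg (b ^ 3)]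
    have he : b ^ 12 = (b ^ 6) ^ 2 := by ring
    nlinarith [hx2, he, sq_nonneg (b ^ 6 - 64)]
  have hnn : (0:ℤ) ≤ v := by linarith
  have hm4 : ((v : ZMod 4)) ≠ 0 := by
    have hz : ∀ x : ZMod 4, x ^ 12 - x ^ 6 + 1 ≠ 0 := by decide
    rw [hv]; push_cast; apply hz
  have hm9 : ((v : ZMod 9)) ≠ 0 := by
    have hz : ∀ x : ZMod 9, x ^ 12 - x ^ 6 + 1 ≠ 0 := by decide
    rw [hv]; push_cast; apply hz
  have hNv : ((v.toNat : ℤ)) = v := Int.toNat_of_nonneg hnn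
  obtain ⟨p, hp, hpd, h5⟩ := exists_big_prime (N := v.toNat)
    (zmod_transfer hnn hm4) (zmod_transfer hnn hm9) (by omega)
  have hpdZ : (p : ℤ) ∣ v := by rw [← hNv]; exact_mod_cast hpd
  refine ⟨p, goodprime_of_cert hp h5 (by norm_num) ?_ ?_⟩
  · exact hpdZ.trans ⟨(b ^ 6 + 1) * (b ^ 18 - 1), by rw [hv]; ring⟩
  · intro q hq hqd
    have hq23 : q = 2 ∨ q = 3 := by
      have h2 := hq.two_le
      have hle := Nat.le_of_dvd (by norm_num) hqd
      interval_cases q <;> first | (left; rfl) | (right; rfl) | (exfalso; revert hq hqd; decide)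
    intro hbad
    rcases hq23 with rfl | rfl
    · have hbad' : (p : ℤ) ∣ b ^ 18 - 1 := by norm_num at hbad; exact hbad
      exact q2_refute h5 hpdZ (b ^ 6 + 1) (by rw [hv]; ring) hbad'
    · have hbad' : (p : ℤ) ∣ b ^ 12 - 1 := by norm_num at hbad; exact hbad
      exact q3_refute h5 hpdZ (b ^ 12 + b ^ 6 + 1) (by rw [hv]; ring) hbad'

lemma good48 {b : ℤ} (hb : 2 ≤ b) : ∃ p : ℕ, GoodPrime b 48 p := by
  set v : ℤ := b ^ 16 - b ^ 8 + 1 with hv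
  have hsz : 6 < v := by
    have hx : (16:ℤ) ≤ b ^ 4 := by
      have := pow_le_pow_left₀ (by norm_num : (0:ℤ) ≤ 2) hb 4
      norm_num at this; exact this
    have hx2 : (256:ℤ) ≤ b ^ 8 := by nlinarith [hx, sq_nonneg (b ^ 4 - 16), sq_nonneg (b ^ 4)]
    have he : b ^ 16 = (b ^ 8) ^ 2 := by ring
    nlinarith [hx2, he, sq_nonneg (b ^ 8 - 256)]
  have hnn : (0:ℤ) ≤ v := by linarith
  have hm4 : ((v : ZMod 4)) ≠ 0 := by
    have hz : ∀ x : ZMod 4, x ^ 16 - x ^ 8 + 1 ≠ 0 := by decide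
    rw [hv]; push_cast; apply hz
  have hm9 : ((v : ZMod 9)) ≠ 0 := by
    have hz : ∀ x : ZMod 9, x ^ 16 - x ^ 8 + 1 ≠ 0 := by decide
    rw [hv]; push_cast; apply hz
  have hNv : ((v.toNat : ℤ)) = v := Int.toNat_of_nonneg hnn
  obtain ⟨p, hp, hpd, h5⟩ := exists_big_prime (N := v.toNat)
    (zmod_transfer hnn hm4) (zmod_transfer hnn hm9) (by omega)
  have hpdZ : (p : ℤ) ∣ v := by rw [← hNv]; exact_mod_cast hpd
  refine ⟨p, goodprime_of_cert hp h5 (by norm_num) ?_ ?_⟩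
  · exact hpdZ.trans ⟨(b ^ 8 + 1) * (b ^ 24 - 1), by rw [hv]; ring⟩
  · intro q hq hqd
    have hq23 : q = 2 ∨ q = 3 := by
      have h2 := hq.two_le
      have hle := Nat.le_of_dvd (by norm_num) hqd
      interval_cases q <;> first | (left; rfl) | (right; rfl) | (exfalso; revert hq hqd; decide)
    intro hbad
    rcases hq23 with rfl | rfl
    · have hbad' : (p : ℤ) ∣ b ^ 24 - 1 := by norm_num at hbad; exact hbad
      exact q2_refute h5 hpdZ (b ^ 8 + 1) (by rw [hv]; ring) hbad'
    · have hbad' : (p : ℤ) ∣ b ^ 16 - 1 := by norm_num at hbad; exact hbad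
      exact q3_refute h5 hpdZ (b ^ 16 + b ^ 8 + 1) (by rw [hv]; ring) hbad'

lemma good_coprime_M {b : ℤ} (hb : 2 ≤ b) {d p : ℕ} (h : GoodPrime b d p) (hd : 2 ≤ d) :
    Nat.Coprime p (144 * (b - 1).toNat) := by
  have hp := h.1
  rw [Nat.Prime.coprime_iff_not_dvd hp]
  intro hdvd
  rcases (Nat.Prime.dvd_mul hp).mp hdvd with h1 | h1
  · have h2 : p ∣ 2 ^ 4 * 3 ^ 2 := by norm_num at h1 ⊢; exact h1
    have h5 := h.2.1
    rcases (Nat.Prime.dvd_mul hp).mp h2 with h3 | h3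
    · have := (Nat.prime_dvd_prime_iff_eq hp Nat.prime_two).mp (hp.dvd_of_dvd_pow h3)
      omega
    · have := (Nat.prime_dvd_prime_iff_eq hp Nat.prime_three).mp (hp.dvd_of_dvd_pow h3)
      omega
  · have h2 : (p : ℤ) ∣ b - 1 := by
      have h3 := Int.natCast_dvd_natCast.mpr h1
      rwa [Int.toNat_of_nonneg (by omega)] at h3
    refine h.2.2.2 1 (one_dvd d) (by omega) ?_
    rwa [pow_one]

lemma pairwise_good {b : ℤ} (hb : 2 ≤ b) (l : List (ℕ × ℕ × ℕ))
    (hgood : ∀ x ∈ l, 2 ≤ x.1 ∧ GoodPrime b x.1 x.2.1)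
    (hne : (l.map Prod.fst).Pairwise (· ≠ ·)) :
    ((144 * (b - 1).toNat) :: l.map (fun x => x.2.1)).Pairwise Nat.Coprime := by
  rw [List.pairwise_cons]
  constructor
  · intro p hp
    rcases List.mem_map.mp hp with ⟨x, hx, rfl⟩
    exact (good_coprime_M hb (hgood x hx).2 (hgood x hx).1).symm
  · rw [List.pairwise_map]
    rw [List.pairwise_map] at hne
    refine List.Pairwise.imp_of_mem ?_ hne
    intro x y hx hy hxy
    have h1 := hgood x hx
    have h2 := hgood y hy
    exact (Nat.coprime_primes h1.2.1 h2.2.1).mpr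
      (GoodPrime.ne (by omega) (by omega) h1.2 h2.2 hxy)

lemma tmod {t W M d : ℕ} (h : t ≡ W [MOD M]) (hd : d ∣ M) : t ≡ W % d [MOD d] :=
  (Nat.ModEq.of_dvd hd h).trans (Nat.mod_modEq W d).symm

lemma coverB_mem (n : ℕ) : n % 3 = 0 ∨ n % 4 = 0 ∨ n % 6 = 1 ∨ n % 8 = 2 ∨ n % 9 = 2 ∨
    n % 12 = 5 ∨ n % 16 = 6 ∨ n % 18 = 5 ∨ n % 24 = 22 ∨ n % 36 = 35 ∨ n % 48 = 14 := by
  have key : ∀ m : ℕ, m < 144 → (m % 3 = 0 ∨ m % 4 = 0 ∨ m % 6 = 1 ∨ m % 8 = 2 ∨ m % 9 = 2 ∨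
      m % 12 = 5 ∨ m % 16 = 6 ∨ m % 18 = 5 ∨ m % 24 = 22 ∨ m % 36 = 35 ∨ m % 48 = 14) := by
    decide
  have h := key (n % 144) (Nat.mod_lt _ (by norm_num))
  have e3 : n % 144 % 3 = n % 3 := Nat.mod_mod_of_dvd n (by norm_num)
  have e4 : n % 144 % 4 = n % 4 := Nat.mod_mod_of_dvd n (by norm_num)
  have e6 : n % 144 % 6 = n % 6 := Nat.mod_mod_of_dvd n (by norm_num)
  have e8 : n % 144 % 8 = n % 8 := Nat.mod_mod_of_dvd n (by norm_num)
  have e9 : n % 144 % 9 = n % 9 := Nat.mod_mod_of_dvd n (by norm_num)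
  have e12 : n % 144 % 12 = n % 12 := Nat.mod_mod_of_dvd n (by norm_num)
  have e16 : n % 144 % 16 = n % 16 := Nat.mod_mod_of_dvd n (by norm_num)
  have e18 : n % 144 % 18 = n % 18 := Nat.mod_mod_of_dvd n (by norm_num)
  have e24 : n % 144 % 24 = n % 24 := Nat.mod_mod_of_dvd n (by norm_num)
  have e36 : n % 144 % 36 = n % 36 := Nat.mod_mod_of_dvd n (by norm_num)
  have e48 : n % 144 % 48 = n % 48 := Nat.mod_mod_of_dvd n (by norm_num)
  rw [e3, e4, e6, e8, e9, e12, e16, e18, e24, e36, e48] at h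
  exact h
lemma branchB (b α β : ℤ) (hb : 3 ≤ b) :
    {t : ℕ | 0 < t ∧ Int.gcd ((t : ℤ) * b ^ t + α + β) (b - 1) = 1 ∧
      ∀ n : ℕ, 0 < n → IsComposite (((t : ℤ) * b ^ t + α) * b ^ n + β)}.Infinite := by
  have hb2 : 2 ≤ b := by omega
  obtain ⟨p3, hg3⟩ := good3 hb2
  obtain ⟨p4, hg4⟩ := good4 hb2
  obtain ⟨p6, hg6⟩ := good6 hb
  obtain ⟨p8, hg8⟩ := good8 hb2
  obtain ⟨p9, hg9⟩ := good9 hb2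
  obtain ⟨p12, hg12⟩ := good12 hb2
  obtain ⟨p16, hg16⟩ := good16 hb2
  obtain ⟨p18, hg18⟩ := good18 hb2
  obtain ⟨p24, hg24⟩ := good24 hb2
  obtain ⟨p36, hg36⟩ := good36 hb2
  obtain ⟨p48, hg48⟩ := good48 hb2
  set M : ℕ := 144 * (b - 1).toNat with hMdef
  have hbn : (0:ℤ) ≤ b - 1 := by omega
  have hMpos : 0 < M := by rw [hMdef]; omega
  have hMbZ : (b - 1) ∣ (M : ℤ) := by
    rw [hMdef]
    push_cast [Int.toNat_of_nonneg hbn]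
    exact dvd_mul_left (b - 1) 144
  set W : ℕ := ((1 - α - β) % (M : ℤ)).toNat with hWdef
  have hWspec : ((W : ℤ)) = (1 - α - β) % (M : ℤ) := by
    rw [hWdef]
    exact Int.toNat_of_nonneg (Int.emod_nonneg _ (by exact_mod_cast hMpos.ne'))
  obtain ⟨c3, hc3⟩ := cres_spec b α β p3 3 0 (W % 3) hg3.1 (by norm_num) hg3.2.2.1
  obtain ⟨c4, hc4⟩ := cres_spec b α β p4 4 0 (W % 4) hg4.1 (by norm_num) hg4.2.2.1
  obtain ⟨c6, hc6⟩ := cres_spec b α β p6 6 5 (W % 6) hg6.1 (by norm_num) hg6.2.2.1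
  obtain ⟨c8, hc8⟩ := cres_spec b α β p8 8 6 (W % 8) hg8.1 (by norm_num) hg8.2.2.1
  obtain ⟨c9, hc9⟩ := cres_spec b α β p9 9 7 (W % 9) hg9.1 (by norm_num) hg9.2.2.1
  obtain ⟨c12, hc12⟩ := cres_spec b α β p12 12 7 (W % 12) hg12.1 (by norm_num) hg12.2.2.1
  obtain ⟨c16, hc16⟩ := cres_spec b α β p16 16 10 (W % 16) hg16.1 (by norm_num) hg16.2.2.1
  obtain ⟨c18, hc18⟩ := cres_spec b α β p18 18 13 (W % 18) hg18.1 (by norm_num) hg18.2.2.1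
  obtain ⟨c24, hc24⟩ := cres_spec b α β p24 24 2 (W % 24) hg24.1 (by norm_num) hg24.2.2.1
  obtain ⟨c36, hc36⟩ := cres_spec b α β p36 36 1 (W % 36) hg36.1 (by norm_num) hg36.2.2.1
  obtain ⟨c48, hc48⟩ := cres_spec b α β p48 48 34 (W % 48) hg48.1 (by norm_num) hg48.2.2.1
  set P : List (ℕ × ℕ) := [(p3, c3), (p4, c4), (p6, c6), (p8, c8), (p9, c9), (p12, c12), (p16, c16), (p18, c18), (p24, c24), (p36, c36), (p48, c48)] with hP
  apply skeleton b α β hb2 M hMpos W hMbZ ?_ P ?_ ?_ ((p3 : ℤ) + p4 + p6 + p8 + p9 + p12 + p16 + p18 + p24 + p36 + p48) ?_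
  · have key : ((W:ℤ)) - (1 - α - β) = -((M:ℤ) * ((1 - α - β) / (M:ℤ))) := by
      rw [hWspec, Int.emod_def]; ring
    rw [key]
    exact (hMbZ.mul_right _).neg_right
  · -- pairwise coprime
    have hpw := pairwise_good hb2 [(3, p3, c3), (4, p4, c4), (6, p6, c6), (8, p8, c8), (9, p9, c9), (12, p12, c12), (16, p16, c16), (18, p18, c18), (24, p24, c24), (36, p36, c36), (48, p48, c48)] ?_ ?_
    · exact hpw
    · intro x hx
      fin_cases hx <;> exact ⟨by norm_num, by assumption⟩
    · simp only [List.map]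
      decide
  · -- positivity
    intro q hq
    rw [hP] at hq
    fin_cases hq <;> simp <;> first | exact hg3.1.pos | exact hg4.1.pos | exact hg6.1.pos | exact hg8.1.pos | exact hg9.1.pos | exact hg12.1.pos | exact hg16.1.pos | exact hg18.1.pos | exact hg24.1.pos | exact hg36.1.pos | exact hg48.1.pos
  · -- divisibility
    intro t n hn hMt hPt
    have hcov := coverB_mem n
    have ht3 : t ≡ W % 3 [MOD 3] := tmod hMt (Dvd.dvd.mul_right (by norm_num) _)
    have ht4 : t ≡ W % 4 [MOD 4] := tmod hMt (Dvd.dvd.mul_right (by norm_num) _)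
    have ht6 : t ≡ W % 6 [MOD 6] := tmod hMt (Dvd.dvd.mul_right (by norm_num) _)
    have ht8 : t ≡ W % 8 [MOD 8] := tmod hMt (Dvd.dvd.mul_right (by norm_num) _)
    have ht9 : t ≡ W % 9 [MOD 9] := tmod hMt (Dvd.dvd.mul_right (by norm_num) _)
    have ht12 : t ≡ W % 12 [MOD 12] := tmod hMt (Dvd.dvd.mul_right (by norm_num) _)
    have ht16 : t ≡ W % 16 [MOD 16] := tmod hMt (Dvd.dvd.mul_right (by norm_num) _)
    have ht18 : t ≡ W % 18 [MOD 18] := tmod hMt (Dvd.dvd.mul_right (by norm_num) _)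
    have ht24 : t ≡ W % 24 [MOD 24] := tmod hMt (Dvd.dvd.mul_right (by norm_num) _)
    have ht36 : t ≡ W % 36 [MOD 36] := tmod hMt (Dvd.dvd.mul_right (by norm_num) _)
    have ht48 : t ≡ W % 48 [MOD 48] := tmod hMt (Dvd.dvd.mul_right (by norm_num) _)
    rcases hcov with h | h | h | h | h | h | h | h | h | h | h
    · refine ⟨(p3 : ℤ), by exact_mod_cast hg3.1.one_lt, by push_cast; omega, ?_⟩
      exact class_dvd (a := 0) hg3.2.2.1 (by norm_num) (by simp [h]) ht3
        (hc3 t (hPt (p3, c3) (by rw [hP]; simp)))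
    · refine ⟨(p4 : ℤ), by exact_mod_cast hg4.1.one_lt, by push_cast; omega, ?_⟩
      exact class_dvd (a := 0) hg4.2.2.1 (by norm_num) (by simp [h]) ht4
        (hc4 t (hPt (p4, c4) (by rw [hP]; simp)))
    · refine ⟨(p6 : ℤ), by exact_mod_cast hg6.1.one_lt, by push_cast; omega, ?_⟩
      exact class_dvd (a := 1) hg6.2.2.1 (by norm_num) (by simp [h]) ht6
        (hc6 t (hPt (p6, c6) (by rw [hP]; simp)))
    · refine ⟨(p8 : ℤ), by exact_mod_cast hg8.1.one_lt, by push_cast; omega, ?_⟩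
      exact class_dvd (a := 2) hg8.2.2.1 (by norm_num) (by simp [h]) ht8
        (hc8 t (hPt (p8, c8) (by rw [hP]; simp)))
    · refine ⟨(p9 : ℤ), by exact_mod_cast hg9.1.one_lt, by push_cast; omega, ?_⟩
      exact class_dvd (a := 2) hg9.2.2.1 (by norm_num) (by simp [h]) ht9
        (hc9 t (hPt (p9, c9) (by rw [hP]; simp)))
    · refine ⟨(p12 : ℤ), by exact_mod_cast hg12.1.one_lt, by push_cast; omega, ?_⟩
      exact class_dvd (a := 5) hg12.2.2.1 (by norm_num) (by simp [h]) ht12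
        (hc12 t (hPt (p12, c12) (by rw [hP]; simp)))
    · refine ⟨(p16 : ℤ), by exact_mod_cast hg16.1.one_lt, by push_cast; omega, ?_⟩
      exact class_dvd (a := 6) hg16.2.2.1 (by norm_num) (by simp [h]) ht16
        (hc16 t (hPt (p16, c16) (by rw [hP]; simp)))
    · refine ⟨(p18 : ℤ), by exact_mod_cast hg18.1.one_lt, by push_cast; omega, ?_⟩
      exact class_dvd (a := 5) hg18.2.2.1 (by norm_num) (by simp [h]) ht18
        (hc18 t (hPt (p18, c18) (by rw [hP]; simp)))
    · refine ⟨(p24 : ℤ), by exact_mod_cast hg24.1.one_lt, by push_cast; omega, ?_⟩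
      exact class_dvd (a := 22) hg24.2.2.1 (by norm_num) (by simp [h]) ht24
        (hc24 t (hPt (p24, c24) (by rw [hP]; simp)))
    · refine ⟨(p36 : ℤ), by exact_mod_cast hg36.1.one_lt, by push_cast; omega, ?_⟩
      exact class_dvd (a := 35) hg36.2.2.1 (by norm_num) (by simp [h]) ht36
        (hc36 t (hPt (p36, c36) (by rw [hP]; simp)))
    · refine ⟨(p48 : ℤ), by exact_mod_cast hg48.1.one_lt, by push_cast; omega, ?_⟩
      exact class_dvd (a := 14) hg48.2.2.1 (by norm_num) (by simp [h]) ht48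
        (hc48 t (hPt (p48, c48) (by rw [hP]; simp)))

lemma coverA_mem (n : ℕ) : n % 2 = 0 ∨ n % 3 = 0 ∨ n % 4 = 1 ∨ n % 9 = 1 ∨
    n % 12 = 11 ∨ n % 18 = 7 ∨ n % 36 = 31 := by
  have key : ∀ m : ℕ, m < 36 → (m % 2 = 0 ∨ m % 3 = 0 ∨ m % 4 = 1 ∨ m % 9 = 1 ∨
      m % 12 = 11 ∨ m % 18 = 7 ∨ m % 36 = 31) := by decide
  have h := key (n % 36) (Nat.mod_lt _ (by norm_num))
  have e2 : n % 36 % 2 = n % 2 := Nat.mod_mod_of_dvd n (by norm_num)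
  have e3 : n % 36 % 3 = n % 3 := Nat.mod_mod_of_dvd n (by norm_num)
  have e4 : n % 36 % 4 = n % 4 := Nat.mod_mod_of_dvd n (by norm_num)
  have e9 : n % 36 % 9 = n % 9 := Nat.mod_mod_of_dvd n (by norm_num)
  have e12 : n % 36 % 12 = n % 12 := Nat.mod_mod_of_dvd n (by norm_num)
  have e18 : n % 36 % 18 = n % 18 := Nat.mod_mod_of_dvd n (by norm_num)
  have e36 : n % 36 % 36 = n % 36 := Nat.mod_mod_of_dvd n (by norm_num)
  rw [e2, e3, e4, e9, e12, e18, e36] at h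
  exact h

lemma branch2 (α β : ℤ) :
    {t : ℕ | 0 < t ∧ Int.gcd ((t : ℤ) * (2:ℤ) ^ t + α + β) ((2:ℤ) - 1) = 1 ∧
      ∀ n : ℕ, 0 < n → IsComposite (((t : ℤ) * (2:ℤ) ^ t + α) * (2:ℤ) ^ n + β)}.Infinite := by
  set v : ℕ := (((-β - α : ℤ) : ZMod 3)).val with hvdef
  have hv3 : v < 3 := ZMod.val_lt _
  set W : ℕ := 28 * v with hWdef
  set M : ℕ := 36 with hMdef
  obtain ⟨c3, hc3⟩ := cres_spec 2 α β 7 3 0 (W % 3) (by norm_num) (by norm_num) (by norm_num)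
  obtain ⟨c4, hc4⟩ := cres_spec 2 α β 5 4 3 (W % 4) (by norm_num) (by norm_num) (by norm_num)
  obtain ⟨c9, hc9⟩ := cres_spec 2 α β 73 9 8 (W % 9) (by norm_num) (by norm_num) (by norm_num)
  obtain ⟨c12, hc12⟩ := cres_spec 2 α β 13 12 1 (W % 12) (by norm_num) (by norm_num) (by norm_num)
  obtain ⟨c18, hc18⟩ := cres_spec 2 α β 19 18 11 (W % 18) (by norm_num) (by norm_num) (by norm_num)
  obtain ⟨c36, hc36⟩ := cres_spec 2 α β 37 36 5 (W % 36) (by norm_num) (by norm_num) (by norm_num)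
  set P : List (ℕ × ℕ) := [(7, c3), (5, c4), (73, c9), (13, c12), (19, c18), (37, c36)] with hP
  apply skeleton 2 α β (by norm_num) M (by norm_num) W (by norm_num) (by norm_num) P ?_ ?_ 157 ?_
  · exact (by decide : List.Pairwise Nat.Coprime [36, 7, 5, 73, 13, 19, 37])
  · intro q hq
    rw [hP] at hq
    fin_cases hq <;> norm_num
  · intro t n hn hMt hPt
    have hcov := coverA_mem n
    have ht3 : t ≡ W % 3 [MOD 3] := tmod hMt (by norm_num)
    have ht4 : t ≡ W % 4 [MOD 4] := tmod hMt (by norm_num)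
    have ht9 : t ≡ W % 9 [MOD 9] := tmod hMt (by norm_num)
    have ht12 : t ≡ W % 12 [MOD 12] := tmod hMt (by norm_num)
    have ht18 : t ≡ W % 18 [MOD 18] := tmod hMt (by norm_num)
    have ht36 : t ≡ W % 36 [MOD 36] := tmod hMt (by norm_num)
    rcases hcov with h | h | h | h | h | h | h
    · -- n even: divisor 3
      refine ⟨((3:ℕ):ℤ), by norm_num, by norm_num, ?_⟩
      have ht2 : t ≡ 0 [MOD 2] := by
        have h1 : t ≡ W % 2 [MOD 2] := tmod hMt (by norm_num)
        have h2 : W % 2 = 0 := by omega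
        rwa [h2] at h1
      have htv : t ≡ v [MOD 3] := by
        have h1 : t ≡ W % 3 [MOD 3] := tmod hMt (by norm_num)
        have h2 : W % 3 = v % 3 := by omega
        rw [h2] at h1
        exact h1.trans (Nat.mod_modEq v 3)
      have hA : ((3:ℕ) : ℤ) ∣ ((t : ℤ) * 2 ^ 0 + α) + β * 2 ^ 0 := by
        have h1 : ((3:ℕ) : ℤ) ∣ (t : ℤ) - (v : ℤ) :=
          Int.ModEq.dvd (Int.natCast_modEq_iff.mpr htv).symm
        have h2 : ((3:ℕ) : ℤ) ∣ (v : ℤ) + α + β := by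
          rw [← ZMod.intCast_zmod_eq_zero_iff_dvd]
          push_cast
          have h3 : ((v : ℕ) : ZMod 3) = ((-β - α : ℤ) : ZMod 3) := by
            rw [hvdef, ZMod.natCast_val, ZMod.cast_id]
          push_cast at h3
          rw [h3]
          ring
        have key : ((t : ℤ) * 2 ^ 0 + α) + β * 2 ^ 0 = ((t : ℤ) - (v : ℤ)) + ((v : ℤ) + α + β) := by
          ring
        rw [key]
        exact dvd_add h1 h2
      exact class_dvd (a := 0) (by norm_num : ((3:ℕ):ℤ) ∣ 2 ^ 2 - 1) (by norm_num) (by simp [h]) ht2 hA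
    · refine ⟨7, by norm_num, by norm_num, ?_⟩
      exact class_dvd (a := 0) (by norm_num : ((7:ℕ):ℤ) ∣ 2 ^ 3 - 1) (by norm_num) (by simp [h]) ht3
        (hc3 t (hPt (7, c3) (by rw [hP]; simp)))
    · refine ⟨5, by norm_num, by norm_num, ?_⟩
      exact class_dvd (a := 1) (by norm_num : ((5:ℕ):ℤ) ∣ 2 ^ 4 - 1) (by norm_num) (by simp [h]) ht4
        (hc4 t (hPt (5, c4) (by rw [hP]; simp)))
    · refine ⟨73, by norm_num, by norm_num, ?_⟩
      exact class_dvd (a := 1) (by norm_num : ((73:ℕ):ℤ) ∣ 2 ^ 9 - 1) (by norm_num) (by simp [h]) ht9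
        (hc9 t (hPt (73, c9) (by rw [hP]; simp)))
    · refine ⟨13, by norm_num, by norm_num, ?_⟩
      exact class_dvd (a := 11) (by norm_num : ((13:ℕ):ℤ) ∣ 2 ^ 12 - 1) (by norm_num) (by simp [h]) ht12
        (hc12 t (hPt (13, c12) (by rw [hP]; simp)))
    · refine ⟨19, by norm_num, by norm_num, ?_⟩
      exact class_dvd (a := 7) (by norm_num : ((19:ℕ):ℤ) ∣ 2 ^ 18 - 1) (by norm_num) (by simp [h]) ht18
        (hc18 t (hPt (19, c18) (by rw [hP]; simp)))
    · refine ⟨37, by norm_num, by norm_num, ?_⟩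
      exact class_dvd (a := 31) (by norm_num : ((37:ℕ):ℤ) ∣ 2 ^ 36 - 1) (by norm_num) (by simp [h]) ht36
        (hc36 t (hPt (37, c36) (by rw [hP]; simp)))

end SRaux

theorem infinitely_many_sierpinski_riesel_type
    (b : ℤ) (hb : 2 ≤ b) (α β : ℤ) (hαβ : α * β ≠ 0) :
    {t : ℕ | 0 < t ∧ Int.gcd ((t : ℤ) * b ^ t + α + β) (b - 1) = 1 ∧
      ∀ n : ℕ, 0 < n → IsComposite (((t : ℤ) * b ^ t + α) * b ^ n + β)}.Infinite := by
  rcases eq_or_lt_of_le hb with h | h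
  · subst h
    exact SRaux.branch2 α β
  · exact SRaux.branchB b α β (by omega)
end
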